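/- arXiv:1903.01479 — 9 statements merged into one kernel-verified Lean document; each statement's English description precedes it below -/
import Mathlib

section
/- Let ρ and σ be qubit density matrices and p ∈ [0,1]. There exists a finite family (K_i) of incoherent 2×2 Kraus operators with ∑_i K_iᴴK_i ⪯ I and ∑_i K_i ρ K_iᴴ = p·σ if and only if there exists a finite family (L_j) of strictly incoherent 2×2 Kraus operators with ∑_j L_jᴴL_j ⪯ I and ∑_j L_j ρ L_jᴴ = p·σ. (Equivalence of stochastic IO and stochastic SIO transformations for qubits.) -/
open Matrix BigOperators
open scoped Kronecker Classical ComplexOrder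

/-- The qubit state with Bloch vector `(rx, ry, rz)`:
`ρ = (1/2)(I + rx σx + ry σy + rz σz)`. -/
noncomputable def blochState (rx ry rz : ℝ) : Matrix (Fin 2) (Fin 2) ℂ :=
  !![(1 + rz : ℂ)/2, ((rx : ℂ) - ry * Complex.I)/2;
     ((rx : ℂ) + ry * Complex.I)/2, (1 - rz : ℂ)/2]

/-- `K` is an incoherent Kraus operator: every column has at most one nonzero entry. -/
def IsIncoherentKraus {d : ℕ} (K : Matrix (Fin d) (Fin d) ℂ) : Prop :=
  ∀ j i i', K i j ≠ 0 → K i' j ≠ 0 → i = i'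

/-- `K` is a strictly incoherent Kraus operator: every row and every column
has at most one nonzero entry. -/
def IsSIKraus {d : ℕ} (K : Matrix (Fin d) (Fin d) ℂ) : Prop :=
  (∀ i j j', K i j ≠ 0 → K i j' ≠ 0 → j = j') ∧
  (∀ j i i', K i j ≠ 0 → K i' j ≠ 0 → i = i')

/-- Partial trace over the first (A) factor. -/
noncomputable def ptraceA {dA dB : ℕ} (X : Matrix (Fin dA × Fin dB) (Fin dA × Fin dB) ℂ) :
    Matrix (Fin dB) (Fin dB) ℂ :=
  fun j j' => ∑ i, X (i, j) (i, j')

/-- Partial trace over the second (B) factor. -/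
noncomputable def ptraceB {dA dB : ℕ} (X : Matrix (Fin dA × Fin dB) (Fin dA × Fin dB) ℂ) :
    Matrix (Fin dA) (Fin dA) ℂ :=
  fun i i' => ∑ j, X (i, j) (i', j)

/-- The completely dephasing map: keep the diagonal of `X`. -/
noncomputable def dephase {d : ℕ} (X : Matrix (Fin d) (Fin d) ℂ) : Matrix (Fin d) (Fin d) ℂ :=
  Matrix.diagonal X.diag

namespace StochIOSIO

private lemma fin2cases (c b b' : Fin 2) (h : b ≠ b') : c = b ∨ c = b' := by
  have h1 : (c : ℕ) < 2 := c.isLt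
  have h2 : (b : ℕ) < 2 := b.isLt
  have h3 : (b' : ℕ) < 2 := b'.isLt
  simp only [Fin.ext_iff] at h ⊢
  omega

private lemma real_eq {z : ℂ} (h : 0 ≤ z) : z = (z.re : ℂ) := by
  rw [Complex.nonneg_iff] at h
  exact Complex.ext rfl (by rw [Complex.ofReal_im]; exact h.2.symm)

private lemma nonneg_re {z : ℂ} (h : 0 ≤ z) : 0 ≤ z.re := (Complex.nonneg_iff.mp h).1

private lemma psd_diag {M : Matrix (Fin 2) (Fin 2) ℂ} (hM : M.PosSemidef) (i : Fin 2) :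
    0 ≤ M i i := by
  exact hM.diag_nonneg

private lemma psd_trace {M : Matrix (Fin 2) (Fin 2) ℂ} (hM : M.PosSemidef) : 0 ≤ M.trace := by
  rw [Matrix.trace_fin_two]
  exact add_nonneg (psd_diag hM 0) (psd_diag hM 1)

private lemma isSIKraus_zero : IsSIKraus (0 : Matrix (Fin 2) (Fin 2) ℂ) :=
  ⟨fun _ _ _ h => absurd rfl h, fun _ _ _ h => absurd rfl h⟩

private lemma isSIKraus_single {K : Matrix (Fin 2) (Fin 2) ℂ} (r c : Fin 2)
    (h : ∀ i j, K i j ≠ 0 → i = r ∧ j = c) : IsSIKraus K :=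
  ⟨fun i j j' h1 h2 => ((h i j h1).2).trans ((h i j' h2).2).symm,
   fun j i i' h1 h2 => ((h i j h1).1).trans ((h i' j h2).1).symm⟩

private lemma si_gram_offdiag {K : Matrix (Fin 2) (Fin 2) ℂ} (hK : IsSIKraus K)
    {i j : Fin 2} (hij : i ≠ j) : (Kᴴ * K) i j = 0 := by
  simp only [Matrix.mul_apply, Matrix.conjTranspose_apply]
  refine Finset.sum_eq_zero fun a _ => ?_
  by_cases h1 : K a i = 0
  · simp [h1]
  by_cases h2 : K a j = 0
  · simp [h2]
  exact absurd (hK.1 a i j h1 h2) hij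

private lemma bad_structure {K : Matrix (Fin 2) (Fin 2) ℂ} (hI : IsIncoherentKraus K)
    (hS : ¬ IsSIKraus K) : ∃ r : Fin 2, ∀ a b : Fin 2, a ≠ r → K a b = 0 := by
  have hrow : ¬ (∀ i j j', K i j ≠ 0 → K i j' ≠ 0 → j = j') := fun h => hS ⟨h, hI⟩
  push_neg at hrow
  obtain ⟨r, b, b', hb, hb', hbb⟩ := hrow
  refine ⟨r, fun a c ha => ?_⟩
  by_contra hc
  have hrc : K r c ≠ 0 := by
    rcases fin2cases c b b' hbb with h | h
    · rw [h]; exact hb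
    · rw [h]; exact hb'
  exact ha (hI c a r hc hrc)

private lemma bad_map_offdiag {K ρ : Matrix (Fin 2) (Fin 2) ℂ} {r : Fin 2}
    (hr : ∀ a b : Fin 2, a ≠ r → K a b = 0) {i j : Fin 2} (hij : i ≠ r ∨ j ≠ r) :
    (K * ρ * Kᴴ) i j = 0 := by
  simp only [Matrix.mul_apply, Matrix.conjTranspose_apply]
  refine Finset.sum_eq_zero fun b _ => ?_
  rcases hij with h | h
  · have hz : ∀ a ∈ Finset.univ, K i a * ρ a b = 0 := fun a _ => by rw [hr i a h, zero_mul]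
    rw [Finset.sum_eq_zero hz, zero_mul]
  · rw [hr j b h, star_zero, mul_zero]


private lemma mul00 (ρ : Matrix (Fin 2) (Fin 2) ℂ) (z : ℂ) :
    !![z, 0; 0, 0] * ρ * !![z, 0; 0, 0]ᴴ = !![z * ρ 0 0 * star z, 0; 0, 0] := by
  ext i j
  fin_cases i <;> fin_cases j <;>
    simp [Matrix.mul_apply, Fin.sum_univ_two, Matrix.conjTranspose_apply, Matrix.vecMul,
      dotProduct]

private lemma mul01 (ρ : Matrix (Fin 2) (Fin 2) ℂ) (z : ℂ) :
    !![0, z; 0, 0] * ρ * !![0, z; 0, 0]ᴴ = !![z * ρ 1 1 * star z, 0; 0, 0] := by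
  ext i j
  fin_cases i <;> fin_cases j <;>
    simp [Matrix.mul_apply, Fin.sum_univ_two, Matrix.conjTranspose_apply, Matrix.vecMul,
      dotProduct]

private lemma mul10 (ρ : Matrix (Fin 2) (Fin 2) ℂ) (z : ℂ) :
    !![0, 0; z, 0] * ρ * !![0, 0; z, 0]ᴴ = !![0, 0; 0, z * ρ 0 0 * star z] := by
  ext i j
  fin_cases i <;> fin_cases j <;>
    simp [Matrix.mul_apply, Fin.sum_univ_two, Matrix.conjTranspose_apply, Matrix.vecMul,
      dotProduct]

private lemma mul11 (ρ : Matrix (Fin 2) (Fin 2) ℂ) (z : ℂ) :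
    !![0, 0; 0, z] * ρ * !![0, 0; 0, z]ᴴ = !![0, 0; 0, z * ρ 1 1 * star z] := by
  ext i j
  fin_cases i <;> fin_cases j <;>
    simp [Matrix.mul_apply, Fin.sum_univ_two, Matrix.conjTranspose_apply, Matrix.vecMul,
      dotProduct]

private lemma gram00 (z : ℂ) :
    !![z, 0; 0, 0]ᴴ * !![z, 0; 0, 0] = !![star z * z, 0; 0, 0] := by
  ext i j
  fin_cases i <;> fin_cases j <;>
    simp [Matrix.mul_apply, Fin.sum_univ_two, Matrix.conjTranspose_apply, Matrix.vecMul,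
      dotProduct]

private lemma gram01 (z : ℂ) :
    !![0, z; 0, 0]ᴴ * !![0, z; 0, 0] = !![0, 0; 0, star z * z] := by
  ext i j
  fin_cases i <;> fin_cases j <;>
    simp [Matrix.mul_apply, Fin.sum_univ_two, Matrix.conjTranspose_apply, Matrix.vecMul,
      dotProduct]

private lemma gram10 (z : ℂ) :
    !![0, 0; z, 0]ᴴ * !![0, 0; z, 0] = !![star z * z, 0; 0, 0] := by
  ext i j
  fin_cases i <;> fin_cases j <;>
    simp [Matrix.mul_apply, Fin.sum_univ_two, Matrix.conjTranspose_apply, Matrix.vecMul,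
      dotProduct]

private lemma gram11 (z : ℂ) :
    !![0, 0; 0, z]ᴴ * !![0, 0; 0, z] = !![0, 0; 0, star z * z] := by
  ext i j
  fin_cases i <;> fin_cases j <;>
    simp [Matrix.mul_apply, Fin.sum_univ_two, Matrix.conjTranspose_apply, Matrix.vecMul,
      dotProduct]

private lemma sqrt_star_mul {x : ℝ} (hx : 0 ≤ x) :
    star ((Real.sqrt x : ℝ) : ℂ) * ((Real.sqrt x : ℝ) : ℂ) = (x : ℂ) := by
  rw [Complex.star_def, Complex.conj_ofReal, ← Complex.ofReal_mul, Real.mul_self_sqrt hx]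

end StochIOSIO

set_option maxHeartbeats 1600000 in
/-- Stochastic incoherent operations and stochastic strictly incoherent operations
achieve exactly the same qubit state transformations `ρ → p σ`. -/
theorem stochastic_io_iff_sio_qubit
    (ρ σ : Matrix (Fin 2) (Fin 2) ℂ)
    (hρ : ρ.PosSemidef) (hρtr : ρ.trace = 1)
    (hσ : σ.PosSemidef) (hσtr : σ.trace = 1)
    (p : ℝ) (hp0 : 0 ≤ p) (hp1 : p ≤ 1) :
    (∃ (N : ℕ) (K : Fin N → Matrix (Fin 2) (Fin 2) ℂ),
        (∀ i, IsIncoherentKraus (K i)) ∧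
        ((1 : Matrix (Fin 2) (Fin 2) ℂ) - ∑ i, (K i)ᴴ * K i).PosSemidef ∧
        ∑ i, K i * ρ * (K i)ᴴ = (p : ℂ) • σ) ↔
    (∃ (N : ℕ) (L : Fin N → Matrix (Fin 2) (Fin 2) ℂ),
        (∀ j, IsSIKraus (L j)) ∧
        ((1 : Matrix (Fin 2) (Fin 2) ℂ) - ∑ j, (L j)ᴴ * L j).PosSemidef ∧
        ∑ j, L j * ρ * (L j)ᴴ = (p : ℂ) • σ) := by
  constructor
  · rintro ⟨N, K, hKinc, hKbud, hKmap⟩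
    classical
    -- split the family into strictly incoherent part and "single row" part
    set G : Fin N → Matrix (Fin 2) (Fin 2) ℂ :=
      fun i => if IsSIKraus (K i) then K i else 0 with hGdef
    set A : Matrix (Fin 2) (Fin 2) ℂ := ∑ i, (G i)ᴴ * G i with hAdef
    set Bg : Matrix (Fin 2) (Fin 2) ℂ :=
      ∑ i, (if IsSIKraus (K i) then 0 else (K i)ᴴ * K i) with hBgdef
    set GM : Matrix (Fin 2) (Fin 2) ℂ := ∑ i, G i * ρ * (G i)ᴴ with hGMdef
    set BM : Matrix (Fin 2) (Fin 2) ℂ :=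
      ∑ i, (if IsSIKraus (K i) then 0 else K i * ρ * (K i)ᴴ) with hBMdef
    have hTsplit : ∑ i, (K i)ᴴ * K i = A + Bg := by
      rw [hAdef, hBgdef, ← Finset.sum_add_distrib]
      refine Finset.sum_congr rfl fun i _ => ?_
      by_cases h : IsSIKraus (K i) <;> simp [hGdef, h]
    have hMsplit : ∑ i, K i * ρ * (K i)ᴴ = GM + BM := by
      rw [hGMdef, hBMdef, ← Finset.sum_add_distrib]
      refine Finset.sum_congr rfl fun i _ => ?_
      by_cases h : IsSIKraus (K i) <;> simp [hGdef, h]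
    have sum_psd : ∀ (f : Fin N → Matrix (Fin 2) (Fin 2) ℂ),
        (∀ i, (f i).PosSemidef) → (∑ i, f i).PosSemidef := fun f hf =>
      Finset.sum_induction f _ (fun _ _ ha hb => ha.add hb) Matrix.PosSemidef.zero
        (fun i _ => hf i)
    have hApsd : A.PosSemidef :=
      sum_psd _ fun i => Matrix.posSemidef_conjTranspose_mul_self _
    have hBgpsd : Bg.PosSemidef := sum_psd _ fun i => by
      by_cases h : IsSIKraus (K i)
      · simpa [h] using Matrix.PosSemidef.zero
      · simpa [h] using Matrix.posSemidef_conjTranspose_mul_self (K i)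
    have hBMpsd : BM.PosSemidef := sum_psd _ fun i => by
      by_cases h : IsSIKraus (K i)
      · simpa [h] using Matrix.PosSemidef.zero
      · simpa [h] using hρ.mul_mul_conjTranspose_same (K i)
    have hAoff : ∀ i j : Fin 2, i ≠ j → A i j = 0 := by
      intro i j hij
      rw [hAdef, Matrix.sum_apply]
      refine Finset.sum_eq_zero fun k _ => ?_
      by_cases h : IsSIKraus (K k)
      · have hg : G k = K k := by simp [hGdef, h]
        rw [hg]; exact StochIOSIO.si_gram_offdiag h hij
      · have hg : G k = 0 := by simp [hGdef, h]
        simp [hg]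
    -- real diagonal data
    set a0 : ℝ := (A 0 0).re with ha0def
    set a1 : ℝ := (A 1 1).re with ha1def
    have hA00 : A 0 0 = (a0 : ℂ) := StochIOSIO.real_eq (StochIOSIO.psd_diag hApsd 0)
    have hA11 : A 1 1 = (a1 : ℂ) := StochIOSIO.real_eq (StochIOSIO.psd_diag hApsd 1)
    set r0 : ℝ := (ρ 0 0).re with hr0def
    set r1 : ℝ := (ρ 1 1).re with hr1def
    have hρ00 : ρ 0 0 = (r0 : ℂ) := StochIOSIO.real_eq (StochIOSIO.psd_diag hρ 0)
    have hρ11 : ρ 1 1 = (r1 : ℂ) := StochIOSIO.real_eq (StochIOSIO.psd_diag hρ 1)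
    have hr0nn : 0 ≤ r0 := StochIOSIO.nonneg_re (StochIOSIO.psd_diag hρ 0)
    have hr1nn : 0 ≤ r1 := StochIOSIO.nonneg_re (StochIOSIO.psd_diag hρ 1)
    have hrsum : r0 + r1 = 1 := by
      have h := hρtr
      rw [Matrix.trace_fin_two, hρ00, hρ11] at h
      exact_mod_cast h
    set c0 : ℝ := (BM 0 0).re with hc0def
    set c1 : ℝ := (BM 1 1).re with hc1def
    have hBM00 : BM 0 0 = (c0 : ℂ) := StochIOSIO.real_eq (StochIOSIO.psd_diag hBMpsd 0)
    have hBM11 : BM 1 1 = (c1 : ℂ) := StochIOSIO.real_eq (StochIOSIO.psd_diag hBMpsd 1)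
    have hc0nn : 0 ≤ c0 := StochIOSIO.nonneg_re (StochIOSIO.psd_diag hBMpsd 0)
    have hc1nn : 0 ≤ c1 := StochIOSIO.nonneg_re (StochIOSIO.psd_diag hBMpsd 1)
    have hBMoff : ∀ i j : Fin 2, i ≠ j → BM i j = 0 := by
      intro i j hij
      rw [hBMdef, Matrix.sum_apply]
      refine Finset.sum_eq_zero fun k _ => ?_
      by_cases h : IsSIKraus (K k)
      · simp [h]
      · obtain ⟨r, hr⟩ := StochIOSIO.bad_structure (hKinc k) h
        rw [if_neg h]
        refine StochIOSIO.bad_map_offdiag hr ?_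
        rcases eq_or_ne i r with h' | h'
        · exact Or.inr fun hj => hij (h'.trans hj.symm)
        · exact Or.inl h'
    -- budget facts
    have hP : ((1 : Matrix (Fin 2) (Fin 2) ℂ) - (A + Bg)).PosSemidef := by
      rw [← hTsplit]; exact hKbud
    have h1A : ((1 : Matrix (Fin 2) (Fin 2) ℂ) - A).PosSemidef := by
      have h := hP.add hBgpsd
      have e : ((1 : Matrix (Fin 2) (Fin 2) ℂ) - (A + Bg)) + Bg = 1 - A := by abel
      rwa [e] at h
    have ha0nn : 0 ≤ a0 := StochIOSIO.nonneg_re (StochIOSIO.psd_diag hApsd 0)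
    have ha1nn : 0 ≤ a1 := StochIOSIO.nonneg_re (StochIOSIO.psd_diag hApsd 1)
    have ha0le : a0 ≤ 1 := by
      have h := StochIOSIO.nonneg_re (StochIOSIO.psd_diag h1A 0)
      simp only [Matrix.sub_apply, Matrix.one_apply_eq, Complex.sub_re, Complex.one_re] at h
      rw [ha0def]; linarith
    have ha1le : a1 ≤ 1 := by
      have h := StochIOSIO.nonneg_re (StochIOSIO.psd_diag h1A 1)
      simp only [Matrix.sub_apply, Matrix.one_apply_eq, Complex.sub_re, Complex.one_re] at h
      rw [ha1def]; linarith
    -- the key trace inequality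
    have htrP : 0 ≤ (ρ * ((1 : Matrix (Fin 2) (Fin 2) ℂ) - (A + Bg))).trace := by
      obtain ⟨Bmat, hB⟩ : ∃ B : Matrix (Fin 2) (Fin 2) ℂ, ρ = Bᴴ * B := by
        open scoped MatrixOrder Matrix.Norms.L2Operator in
        exact CStarAlgebra.nonneg_iff_eq_star_mul_self.mp hρ.nonneg
      rw [hB, Matrix.mul_assoc, Matrix.trace_mul_comm]
      exact StochIOSIO.psd_trace (hP.mul_mul_conjTranspose_same Bmat)
    have htrA : (ρ * A).trace = ((r0 * a0 + r1 * a1 : ℝ) : ℂ) := by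
      rw [Matrix.trace_fin_two]
      have e0 : (ρ * A) 0 0 = ρ 0 0 * A 0 0 + ρ 0 1 * A 1 0 := by
        rw [Matrix.mul_apply, Fin.sum_univ_two]
      have e1 : (ρ * A) 1 1 = ρ 1 0 * A 0 1 + ρ 1 1 * A 1 1 := by
        rw [Matrix.mul_apply, Fin.sum_univ_two]
      rw [e0, e1, hAoff 1 0 (by decide), hAoff 0 1 (by decide), hA00, hA11, hρ00, hρ11]
      push_cast; ring
    have htrBg : (ρ * Bg).trace = BM.trace := by
      rw [hBgdef, hBMdef, Finset.mul_sum, Matrix.trace_sum, Matrix.trace_sum]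
      refine Finset.sum_congr rfl fun i _ => ?_
      by_cases h : IsSIKraus (K i)
      · simp [h]
      · rw [if_neg h, if_neg h,
          Matrix.trace_mul_comm ρ ((K i)ᴴ * K i), Matrix.mul_assoc, Matrix.trace_mul_comm]
    have htrBM : BM.trace = ((c0 + c1 : ℝ) : ℂ) := by
      rw [Matrix.trace_fin_two, hBM00, hBM11]; push_cast; ring
    set Dq : ℝ := (1 - a0) * r0 + (1 - a1) * r1 with hDdef
    have hkey : c0 + c1 ≤ Dq := by
      have hx : (ρ * ((1 : Matrix (Fin 2) (Fin 2) ℂ) - (A + Bg))).trace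
          = 1 - (ρ * A).trace - (ρ * Bg).trace := by
        rw [Matrix.mul_sub, Matrix.mul_add, Matrix.mul_one, Matrix.trace_sub, Matrix.trace_add,
          hρtr]
        ring
      rw [hx, htrA, htrBg, htrBM] at htrP
      have h := StochIOSIO.nonneg_re htrP
      simp only [Complex.sub_re, Complex.one_re, Complex.ofReal_re] at h
      have hD' : Dq = 1 - (r0 * a0 + r1 * a1) := by
        rw [hDdef]; linear_combination hrsum
      rw [hD']; linarith
    have hDnn : 0 ≤ Dq := le_trans (add_nonneg hc0nn hc1nn) hkey
    have h1a0 : 0 ≤ 1 - a0 := by linarith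
    have h1a1 : 0 ≤ 1 - a1 := by linarith
    -- the weights
    set s0 : ℝ := c0 * (1 - a0) / Dq with hs0def
    set t0 : ℝ := c0 * (1 - a1) / Dq with ht0def
    set s1 : ℝ := c1 * (1 - a0) / Dq with hs1def
    set t1 : ℝ := c1 * (1 - a1) / Dq with ht1def
    have hs0nn : 0 ≤ s0 := div_nonneg (mul_nonneg hc0nn h1a0) hDnn
    have ht0nn : 0 ≤ t0 := div_nonneg (mul_nonneg hc0nn h1a1) hDnn
    have hs1nn : 0 ≤ s1 := div_nonneg (mul_nonneg hc1nn h1a0) hDnn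
    have ht1nn : 0 ≤ t1 := div_nonneg (mul_nonneg hc1nn h1a1) hDnn
    have hDne : Dq = 0 → (c0 = 0 ∧ c1 = 0) := fun h => ⟨by linarith, by linarith⟩
    have hsplit0 : s0 * r0 + t0 * r1 = c0 := by
      rcases eq_or_lt_of_le hDnn with hD | hD
      · obtain ⟨h0, _⟩ := hDne hD.symm
        rw [hs0def, ht0def, ← hD, div_zero, div_zero, h0]; ring
      · have hne : Dq ≠ 0 := ne_of_gt hD
        rw [hs0def, ht0def]
        field_simp
        rw [hDdef]
    have hsplit1 : s1 * r0 + t1 * r1 = c1 := by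
      rcases eq_or_lt_of_le hDnn with hD | hD
      · obtain ⟨_, h1⟩ := hDne hD.symm
        rw [hs1def, ht1def, ← hD, div_zero, div_zero, h1]; ring
      · have hne : Dq ≠ 0 := ne_of_gt hD
        rw [hs1def, ht1def]
        field_simp
        rw [hDdef]
    have hsb : s0 + s1 ≤ 1 - a0 := by
      rcases eq_or_lt_of_le hDnn with hD | hD
      · rw [hs0def, hs1def, ← hD, div_zero, div_zero]; linarith
      · rw [hs0def, hs1def, ← add_div, div_le_iff₀ hD]
        nlinarith
    have htb : t0 + t1 ≤ 1 - a1 := by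
      rcases eq_or_lt_of_le hDnn with hD | hD
      · rw [ht0def, ht1def, ← hD, div_zero, div_zero]; linarith
      · rw [ht0def, ht1def, ← add_div, div_le_iff₀ hD]
        nlinarith
    clear_value s0 t0 s1 t1 Dq c0 c1 a0 a1 r0 r1
    have hq0 : ((Real.sqrt s0 : ℝ) : ℂ) * (r0 : ℂ) * ((Real.sqrt s0 : ℝ) : ℂ)
        + ((Real.sqrt t0 : ℝ) : ℂ) * (r1 : ℂ) * ((Real.sqrt t0 : ℝ) : ℂ) = (c0 : ℂ) := by
      have hs : Real.sqrt s0 * Real.sqrt s0 = s0 := Real.mul_self_sqrt hs0nn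
      have ht : Real.sqrt t0 * Real.sqrt t0 = t0 := Real.mul_self_sqrt ht0nn
      have hre : Real.sqrt s0 * r0 * Real.sqrt s0 + Real.sqrt t0 * r1 * Real.sqrt t0 = c0 := by
        calc Real.sqrt s0 * r0 * Real.sqrt s0 + Real.sqrt t0 * r1 * Real.sqrt t0
            = (Real.sqrt s0 * Real.sqrt s0) * r0 + (Real.sqrt t0 * Real.sqrt t0) * r1 := by ring
          _ = s0 * r0 + t0 * r1 := by rw [hs, ht]
          _ = c0 := hsplit0
      exact_mod_cast hre
    have hq1 : ((Real.sqrt s1 : ℝ) : ℂ) * (r0 : ℂ) * ((Real.sqrt s1 : ℝ) : ℂ)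
        + ((Real.sqrt t1 : ℝ) : ℂ) * (r1 : ℂ) * ((Real.sqrt t1 : ℝ) : ℂ) = (c1 : ℂ) := by
      have hs : Real.sqrt s1 * Real.sqrt s1 = s1 := Real.mul_self_sqrt hs1nn
      have ht : Real.sqrt t1 * Real.sqrt t1 = t1 := Real.mul_self_sqrt ht1nn
      have hre : Real.sqrt s1 * r0 * Real.sqrt s1 + Real.sqrt t1 * r1 * Real.sqrt t1 = c1 := by
        calc Real.sqrt s1 * r0 * Real.sqrt s1 + Real.sqrt t1 * r1 * Real.sqrt t1
            = (Real.sqrt s1 * Real.sqrt s1) * r0 + (Real.sqrt t1 * Real.sqrt t1) * r1 := by ring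
          _ = s1 * r0 + t1 * r1 := by rw [hs, ht]
          _ = c1 := hsplit1
      exact_mod_cast hre
    -- the four replacement operators
    set E : Fin 4 → Matrix (Fin 2) (Fin 2) ℂ :=
      ![!![((Real.sqrt s0 : ℝ) : ℂ), 0; 0, 0],
        !![0, ((Real.sqrt t0 : ℝ) : ℂ); 0, 0],
        !![0, 0; ((Real.sqrt s1 : ℝ) : ℂ), 0],
        !![0, 0; 0, ((Real.sqrt t1 : ℝ) : ℂ)]] with hEdef
    have hE0 : E 0 = !![((Real.sqrt s0 : ℝ) : ℂ), 0; 0, 0] := rfl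
    have hE1 : E 1 = !![0, ((Real.sqrt t0 : ℝ) : ℂ); 0, 0] := rfl
    have hE2 : E 2 = !![0, 0; ((Real.sqrt s1 : ℝ) : ℂ), 0] := rfl
    have hE3 : E 3 = !![0, 0; 0, ((Real.sqrt t1 : ℝ) : ℂ)] := rfl
    have hEgram : ∑ j : Fin 4, (E j)ᴴ * E j =
        !![((s0 + s1 : ℝ) : ℂ), 0; 0, ((t0 + t1 : ℝ) : ℂ)] := by
      rw [Fin.sum_univ_four, hE0, hE1, hE2, hE3,
        StochIOSIO.gram00, StochIOSIO.gram01, StochIOSIO.gram10, StochIOSIO.gram11,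
        StochIOSIO.sqrt_star_mul hs0nn, StochIOSIO.sqrt_star_mul ht0nn,
        StochIOSIO.sqrt_star_mul hs1nn, StochIOSIO.sqrt_star_mul ht1nn]
      ext i j
      fin_cases i <;> fin_cases j <;> simp [Matrix.add_apply] <;> push_cast <;> ring
    have hBMeq : BM = !![(c0 : ℂ), 0; 0, (c1 : ℂ)] := by
      ext i j
      fin_cases i <;> fin_cases j
      · simpa using hBM00
      · simpa using hBMoff 0 1 (by decide)
      · simpa using hBMoff 1 0 (by decide)
      · simpa using hBM11
    have hEmap : ∑ j : Fin 4, E j * ρ * (E j)ᴴ = BM := by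
      rw [Fin.sum_univ_four, hE0, hE1, hE2, hE3,
        StochIOSIO.mul00, StochIOSIO.mul01, StochIOSIO.mul10, StochIOSIO.mul11,
        hρ00, hρ11, hBMeq]
      ext i j
      fin_cases i <;> fin_cases j
      · simp only [Matrix.add_apply, Complex.star_def, Complex.conj_ofReal]
        simp
        linear_combination hq0
      · simp [Matrix.add_apply]
      · simp [Matrix.add_apply]
      · simp only [Matrix.add_apply, Complex.star_def, Complex.conj_ofReal]
        simp
        linear_combination hq1
    refine ⟨N + 4, Fin.append G E, ?_, ?_, ?_⟩
    · intro j
      refine Fin.addCases (fun i => ?_) (fun i => ?_) j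
      · rw [Fin.append_left]
        by_cases h : IsSIKraus (K i)
        · have hg : G i = K i := by simp [hGdef, h]
          rwa [hg]
        · have hg : G i = 0 := by simp [hGdef, h]
          rw [hg]; exact StochIOSIO.isSIKraus_zero
      · rw [Fin.append_right]
        fin_cases i
        · rw [show E ⟨0, by norm_num⟩ = E 0 from rfl, hE0]
          exact StochIOSIO.isSIKraus_single 0 0 fun a b hab => by
            fin_cases a <;> fin_cases b <;>
              first
              | exact ⟨rfl, rfl⟩
              | (exfalso; apply hab; simp)
        · rw [show E ⟨1, by norm_num⟩ = E 1 from rfl, hE1]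
          exact StochIOSIO.isSIKraus_single 0 1 fun a b hab => by
            fin_cases a <;> fin_cases b <;>
              first
              | exact ⟨rfl, rfl⟩
              | (exfalso; apply hab; simp)
        · rw [show E ⟨2, by norm_num⟩ = E 2 from rfl, hE2]
          exact StochIOSIO.isSIKraus_single 1 0 fun a b hab => by
            fin_cases a <;> fin_cases b <;>
              first
              | exact ⟨rfl, rfl⟩
              | (exfalso; apply hab; simp)
        · rw [show E ⟨3, by norm_num⟩ = E 3 from rfl, hE3]
          exact StochIOSIO.isSIKraus_single 1 1 fun a b hab => by
            fin_cases a <;> fin_cases b <;>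
              first
              | exact ⟨rfl, rfl⟩
              | (exfalso; apply hab; simp)
    · rw [Fin.sum_univ_add]
      simp only [Fin.append_left, Fin.append_right]
      rw [← hAdef, hEgram]
      have hdiag : (1 : Matrix (Fin 2) (Fin 2) ℂ)
            - (A + !![((s0 + s1 : ℝ) : ℂ), 0; 0, ((t0 + t1 : ℝ) : ℂ)])
          = Matrix.diagonal ![((1 - a0 - (s0 + s1) : ℝ) : ℂ), ((1 - a1 - (t0 + t1) : ℝ) : ℂ)] := by
        ext i j
        fin_cases i <;> fin_cases j <;>
          simp [Matrix.diagonal, hA00, hA11, hAoff 0 1 (by decide), hAoff 1 0 (by decide),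
            Matrix.one_apply] <;> push_cast <;> ring
      rw [hdiag]
      refine Matrix.posSemidef_diagonal_iff.mpr fun i => ?_
      fin_cases i
      · show (0 : ℂ) ≤ ((1 - a0 - (s0 + s1) : ℝ) : ℂ)
        rw [Complex.nonneg_iff]
        exact ⟨by rw [Complex.ofReal_re]; linarith, by rw [Complex.ofReal_im]⟩
      · show (0 : ℂ) ≤ ((1 - a1 - (t0 + t1) : ℝ) : ℂ)
        rw [Complex.nonneg_iff]
        exact ⟨by rw [Complex.ofReal_re]; linarith, by rw [Complex.ofReal_im]⟩
    · rw [Fin.sum_univ_add]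
      simp only [Fin.append_left, Fin.append_right]
      rw [← hGMdef, hEmap, ← hMsplit]
      exact hKmap
  · rintro ⟨N, L, hLsi, hb, hm⟩
    exact ⟨N, L, fun i => (hLsi i).2, hb, hm⟩
end

section
/- Let d, N be natural numbers and let K_1, …, K_N be strictly incoherent d×d Kraus operators with ∑_{n=1}^N K_nᴴK_n ⪯ I. Then there exists a diagonal d×d matrix K̃ with nonnegative real entries (in particular a strictly incoherent Kraus operator) such that K̃ᴴK̃ + ∑_{n=1}^N K_nᴴK_n = I. (Every stochastic quantum operation decomposable into strictly incoherent Kraus operators is part of a deterministic strictly incoherent operation.) -/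
open Matrix BigOperators
open scoped Kronecker Classical ComplexOrder

/-- Every stochastic operation decomposable into strictly incoherent Kraus operators can
be completed to a deterministic strictly incoherent operation by adding a single diagonal
Kraus operator with nonnegative real entries. -/
theorem sio_free_completion (d N : ℕ)
    (K : Fin N → Matrix (Fin d) (Fin d) ℂ)
    (hK : ∀ n, IsSIKraus (K n))
    (hsum : ((1 : Matrix (Fin d) (Fin d) ℂ) - ∑ n, (K n)ᴴ * K n).PosSemidef) :
    ∃ c : Fin d → ℝ, (∀ i, 0 ≤ c i) ∧
      IsSIKraus (Matrix.diagonal (fun i => (c i : ℂ))) ∧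
      (Matrix.diagonal (fun i => (c i : ℂ)))ᴴ * Matrix.diagonal (fun i => (c i : ℂ)) +
        ∑ n, (K n)ᴴ * K n = 1 := by
  classical
  set M : Matrix (Fin d) (Fin d) ℂ := ∑ n, (K n)ᴴ * K n with hM
  -- off-diagonal entries of M vanish
  have hoff : ∀ j j', j ≠ j' → M j j' = 0 := by
    intro j j' hjj
    rw [hM, Matrix.sum_apply]
    apply Finset.sum_eq_zero
    intro n _
    rw [Matrix.mul_apply]
    apply Finset.sum_eq_zero
    intro i _
    rw [Matrix.conjTranspose_apply]
    by_contra h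
    have h1 : K n i j ≠ 0 := by
      intro h0; apply h; simp [h0]
    have h2 : K n i j' ≠ 0 := by
      intro h0; apply h; simp [h0]
    exact hjj ((hK n).1 i j j' h1 h2)
  -- diagonal entries of M are real
  have hdiagre : ∀ i, M i i = ((M i i).re : ℂ) := by
    intro i
    have : (M i i).im = 0 := by
      rw [hM, Matrix.sum_apply]
      rw [Complex.im_sum]
      apply Finset.sum_eq_zero
      intro n _
      rw [Matrix.mul_apply, Complex.im_sum]
      apply Finset.sum_eq_zero
      intro k _
      rw [Matrix.conjTranspose_apply]
      simp [Complex.mul_im]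
      ring
    exact (Complex.ext_iff.2 ⟨rfl, by simp [this]⟩)
  -- diagonal entries of 1 - M are nonneg
  have hnn : ∀ i, (M i i).re ≤ 1 := by
    intro i
    have := hsum.dotProduct_mulVec_nonneg (Pi.single i 1)
    have hval : (star (Pi.single i 1) ⬝ᵥ ((1 - M) *ᵥ Pi.single i 1)) = (1 - M) i i := by
      simp [dotProduct, Matrix.mulVec, Pi.single_apply, Finset.sum_ite_eq,
        dotProduct]
    rw [hval] at this
    have := (Complex.le_def.mp this).1
    simp [Matrix.sub_apply, Matrix.one_apply] at this
    linarith
  refine ⟨fun i => Real.sqrt (1 - (M i i).re), fun i => Real.sqrt_nonneg _, ?_, ?_⟩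
  · have key : ∀ a b : Fin d,
        Matrix.diagonal (fun i => ((Real.sqrt (1 - (M i i).re)) : ℂ)) a b ≠ 0 → a = b := by
      intro a b h
      by_contra hab
      simp [Matrix.diagonal_apply_ne _ hab] at h
    exact ⟨fun i j j' h1 h2 => (key i j h1).symm.trans (key i j' h2),
      fun j i i' h1 h2 => (key i j h1).trans (key i' j h2).symm⟩
  · ext i j
    rcases eq_or_ne i j with rfl | hij
    · have h1 : (M i i).re ≤ 1 := hnn i
      simp only [Matrix.add_apply, Matrix.diagonal_conjTranspose, Matrix.diagonal_mul_diagonal,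
        Matrix.diagonal_apply_eq, Matrix.one_apply_eq, Pi.star_apply, ← hM]
      rw [Complex.star_def, Complex.conj_ofReal, ← Complex.ofReal_mul,
        Real.mul_self_sqrt (by linarith), hdiagre i]
      simp
    · simp only [Matrix.add_apply, Matrix.diagonal_conjTranspose, Matrix.diagonal_mul_diagonal,
        Matrix.diagonal_apply_ne _ hij, Matrix.one_apply_ne hij, ← hM]
      rw [hoff i j hij]
      simp
end

section
/- Let ρ and σ be d×d density matrices, p ∈ [0,1], and suppose there exists a finite family (K_i) of strictly incoherent d×d Kraus operators with ∑_i K_iᴴK_i ⪯ I and ∑_i K_i ρ K_iᴴ = p·σ. Then for every diagonal d×d density matrix τ (incoherent state) and every q with 0 ≤ q ≤ 1−p, there exists a finite family (L_j) of strictly incoherent d×d Kraus operators with ∑_j L_jᴴL_j ⪯ I and ∑_j L_j ρ L_jᴴ = p·σ + q·τ. -/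
open Matrix BigOperators
open scoped Kronecker Classical ComplexOrder

lemma psd_diag_aux {n : ℕ} {M : Matrix (Fin n) (Fin n) ℂ} (hM : M.PosSemidef) (k : Fin n) :
    M k k = ((M k k).re : ℂ) ∧ 0 ≤ (M k k).re := by
  have h := hM.dotProduct_mulVec_nonneg (Pi.single k 1)
  have he : star (Pi.single k 1 : Fin n → ℂ) ⬝ᵥ (M *ᵥ Pi.single k 1) = M k k := by
    simp [dotProduct, Matrix.mulVec, Pi.single_apply]
  rw [he] at h
  rw [Complex.le_def] at h
  exact ⟨(Complex.ext (by simp) (by simp [← h.2])).symm, by simpa using h.1⟩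

lemma stdB_conjT {n : ℕ} (m k : Fin n) :
    (Matrix.single m k (1:ℂ))ᴴ = Matrix.single k m 1 := by
  ext i j
  simp [Matrix.conjTranspose_apply, Matrix.single, apply_ite (starRingEnd ℂ), and_comm]

lemma stdB_sandwich {n : ℕ} (m k : Fin n) (ρ : Matrix (Fin n) (Fin n) ℂ) :
    Matrix.single m k 1 * ρ * Matrix.single k m 1
      = ρ k k • Matrix.single m m 1 := by
  ext i j
  by_cases hi : i = m
  · by_cases hj : j = m
    · subst hi; subst hj
      rw [Matrix.mul_single_apply_same, Matrix.single_mul_apply_same]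
      simp [Matrix.single]
    · rw [Matrix.mul_single_apply_of_ne _ _ _ _ _ hj]
      simp [Matrix.single, hj, Ne.symm hj]
  · have h1 : ∀ b, (Matrix.single m k 1 * ρ : Matrix (Fin n) (Fin n) ℂ) i b = 0 := fun b =>
      Matrix.single_mul_apply_of_ne 1 m k i b hi ρ
    have h2 : (ρ k k • Matrix.single m m 1 : Matrix (Fin n) (Fin n) ℂ) i j = 0 := by
      simp [Matrix.single, Ne.symm hi]
    rw [Matrix.mul_apply, h2]
    exact Finset.sum_eq_zero fun x _ => by rw [h1 x, zero_mul]

/-- If `ρ → p σ` is possible by a stochastic strictly incoherent operation, then for every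
incoherent (diagonal) state `τ` and every `0 ≤ q ≤ 1 - p`, also `ρ → p σ + q τ` is
possible by a stochastic strictly incoherent operation. -/
theorem sio_mixing_with_incoherent (d : ℕ)
    (ρ σ : Matrix (Fin d) (Fin d) ℂ)
    (hρ : ρ.PosSemidef) (hρtr : ρ.trace = 1)
    (hσ : σ.PosSemidef) (hσtr : σ.trace = 1)
    (p : ℝ) (hp0 : 0 ≤ p) (hp1 : p ≤ 1)
    (hconv : ∃ (N : ℕ) (K : Fin N → Matrix (Fin d) (Fin d) ℂ),
      (∀ i, IsSIKraus (K i)) ∧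
      ((1 : Matrix (Fin d) (Fin d) ℂ) - ∑ i, (K i)ᴴ * K i).PosSemidef ∧
      ∑ i, K i * ρ * (K i)ᴴ = (p : ℂ) • σ)
    (τ : Matrix (Fin d) (Fin d) ℂ)
    (hτ : τ.PosSemidef) (hτtr : τ.trace = 1) (hτdiag : τ.IsDiag)
    (q : ℝ) (hq0 : 0 ≤ q) (hq1 : q ≤ 1 - p) :
    ∃ (M : ℕ) (L : Fin M → Matrix (Fin d) (Fin d) ℂ),
      (∀ j, IsSIKraus (L j)) ∧
      ((1 : Matrix (Fin d) (Fin d) ℂ) - ∑ j, (L j)ᴴ * L j).PosSemidef ∧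
      ∑ j, L j * ρ * (L j)ᴴ = (p : ℂ) • σ + (q : ℂ) • τ := by
    classical
  obtain ⟨N, K, hKSI, hKPSD, hKsum⟩ := hconv
  set S : Matrix (Fin d) (Fin d) ℂ := ∑ i, (K i)ᴴ * K i with hS
  set D : Matrix (Fin d) (Fin d) ℂ := 1 - S with hD
  have hSdiag : ∀ j j', j ≠ j' → S j j' = 0 := by
    intro j j' hjj
    rw [hS, Matrix.sum_apply]
    refine Finset.sum_eq_zero fun i _ => ?_
    rw [Matrix.mul_apply]
    refine Finset.sum_eq_zero fun r _ => ?_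
    rw [Matrix.conjTranspose_apply]
    by_cases h1 : K i r j = 0
    · simp [h1]
    by_cases h2 : K i r j' = 0
    · simp [h2]
    exact absurd ((hKSI i).1 r j j' h1 h2) hjj
  have hDoff : ∀ j j', j ≠ j' → D j j' = 0 := by
    intro j j' h
    simp [hD, Matrix.sub_apply, Matrix.one_apply_ne h, hSdiag j j' h]
  have hDkk := fun k => psd_diag_aux hKPSD k
  have hτkk := fun m => psd_diag_aux hτ m
  have hτsum : ∑ m, τ m m = (1:ℂ) := by simpa [Matrix.trace, Matrix.diag] using hτtr
  have hρsum : ∑ k, ρ k k = (1:ℂ) := by simpa [Matrix.trace, Matrix.diag] using hρtr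
  have hSρ : ∑ k, S k k * ρ k k = (p:ℂ) := by
    have h0 := congrArg Matrix.trace hKsum
    rw [Matrix.trace_sum, Matrix.trace_smul, hσtr, smul_eq_mul, mul_one] at h0
    have h1 : ∀ i, (K i * ρ * (K i)ᴴ).trace = (((K i)ᴴ * K i) * ρ).trace := by
      intro i
      rw [Matrix.trace_mul_cycle]
    have h2 : (S * ρ).trace = (p:ℂ) := by
      rw [hS, Finset.sum_mul, Matrix.trace_sum, ← h0]
      exact Finset.sum_congr rfl fun i _ => (h1 i).symm
    rw [← h2]
    simp only [Matrix.trace, Matrix.diag]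
    refine Finset.sum_congr rfl fun k _ => ?_
    rw [Matrix.mul_apply]
    symm
    apply Finset.sum_eq_single
    · intro j _ hj; rw [hSdiag k j (Ne.symm hj), zero_mul]
    · intro h; exact absurd (Finset.mem_univ k) h
  have hkey : ∑ k, D k k * ρ k k = 1 - (p:ℂ) := by
    have hDk : ∀ k, D k k = 1 - S k k := by
      intro k; simp [hD, Matrix.sub_apply, Matrix.one_apply_eq]
    simp only [hDk, sub_mul, one_mul]
    rw [Finset.sum_sub_distrib, hρsum, hSρ]
  set c : ℝ := q / (1 - p) with hc
  have hc0 : 0 ≤ c := div_nonneg hq0 (by linarith)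
  have hcq : c * (1 - p) = q := by
    rcases eq_or_ne (1 - p) 0 with h | h
    · have hq : q = 0 := le_antisymm (h ▸ hq1) hq0
      simp [hc, h, hq]
    · exact div_mul_cancel₀ q h
  have hcqC : (c:ℂ) * (1 - (p:ℂ)) = (q:ℂ) := by
    have := congrArg (Complex.ofReal) hcq
    push_cast at this
    exact this
  have hc1 : c ≤ 1 := by
    rcases eq_or_ne (1 - p) 0 with h | h
    · simp [hc, h]
    · exact (div_le_one (lt_of_le_of_ne (by linarith) (Ne.symm h))).mpr hq1
  set α : Fin d → Fin d → ℝ := fun m k => Real.sqrt (c * (τ m m).re * (D k k).re) with hα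
  have hα2 : ∀ m k, ((α m k : ℂ)) * (α m k) = (c:ℂ) * τ m m * D k k := by
    intro m k
    have hnn : 0 ≤ c * (τ m m).re * (D k k).re :=
      mul_nonneg (mul_nonneg hc0 (hτkk m).2) (hDkk k).2
    rw [(hτkk m).1, (hDkk k).1, ← Complex.ofReal_mul, hα]
    simp only []
    rw [Real.mul_self_sqrt hnn]
    push_cast
    ring
  set E : Fin d → Fin d → Matrix (Fin d) (Fin d) ℂ :=
    fun m k => (α m k : ℂ) • Matrix.single m k 1 with hE
  have hEent : ∀ m k a b, E m k a b ≠ 0 → a = m ∧ b = k := by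
    intro m k a b h
    by_contra hcon
    apply h
    have hne : ¬(m = a ∧ k = b) := fun ⟨h1, h2⟩ => hcon ⟨h1.symm, h2.symm⟩
    simp [hE, Matrix.smul_apply, Matrix.single, hne]
  set L : Fin (N + d * d) → Matrix (Fin d) (Fin d) ℂ :=
    Fin.append K (fun j => E (finProdFinEquiv.symm j).1 (finProdFinEquiv.symm j).2) with hL
  have hsplit : ∀ f : Matrix (Fin d) (Fin d) ℂ → Matrix (Fin d) (Fin d) ℂ,
      ∑ j, f (L j) = (∑ i, f (K i)) + ∑ m, ∑ k, f (E m k) := by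
    intro f
    rw [Fin.sum_univ_add]
    congr 1
    · exact Finset.sum_congr rfl fun i _ => by rw [hL, Fin.append_left]
    · rw [← Equiv.sum_comp finProdFinEquiv (fun j => f (L (Fin.natAdd N j))),
        Fintype.sum_prod_type]
      refine Finset.sum_congr rfl fun m _ => Finset.sum_congr rfl fun k _ => ?_
      rw [hL, Fin.append_right]
      simp
  have hDstd : D = ∑ k, D k k • Matrix.single k k (1:ℂ) := by
    ext i j
    rw [Matrix.sum_apply]
    by_cases h : i = j
    · subst h
      rw [Finset.sum_eq_single i (fun k _ hk => by
          simp [Matrix.smul_apply, Matrix.single, hk])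
        (fun h => absurd (Finset.mem_univ i) h)]
      simp [Matrix.single]
    · rw [hDoff i j h]
      refine (Finset.sum_eq_zero fun k _ => ?_).symm
      simp only [Matrix.smul_apply, Matrix.single, Matrix.of_apply, smul_eq_mul]
      rw [if_neg, mul_zero]
      rintro ⟨h1, h2⟩; exact h (h1 ▸ h2)
  have hτstd : τ = ∑ m, τ m m • Matrix.single m m (1:ℂ) := by
    ext i j
    rw [Matrix.sum_apply]
    by_cases h : i = j
    · subst h
      rw [Finset.sum_eq_single i (fun k _ hk => by
          simp [Matrix.smul_apply, Matrix.single, hk])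
        (fun h => absurd (Finset.mem_univ i) h)]
      simp [Matrix.single]
    · rw [hτdiag h]
      refine (Finset.sum_eq_zero fun k _ => ?_).symm
      simp only [Matrix.smul_apply, Matrix.single, Matrix.of_apply, smul_eq_mul]
      rw [if_neg, mul_zero]
      rintro ⟨h1, h2⟩; exact h (h1 ▸ h2)
  refine ⟨N + d * d, L, ?_, ?_, ?_⟩
  · intro j
    refine Fin.addCases (fun i => ?_) (fun i => ?_) j
    · rw [hL, Fin.append_left]; exact hKSI i
    · rw [hL, Fin.append_right]
      exact ⟨fun a b b' h h' => ((hEent _ _ a b h).2).trans ((hEent _ _ a b' h').2).symm,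
             fun b a a' h h' => ((hEent _ _ a b h).1).trans ((hEent _ _ a' b h').1).symm⟩
  · have hEhE : ∀ m k, (E m k)ᴴ * E m k
        = ((c:ℂ) * τ m m * D k k) • Matrix.single k k 1 := by
      intro m k
      rw [hE]
      simp only []
      rw [Matrix.conjTranspose_smul, stdB_conjT, Matrix.smul_mul, Matrix.mul_smul,
        Matrix.single_mul_single_same, smul_smul, one_mul, ← hα2 m k]
      simp [Complex.conj_ofReal, mul_comm]
    have hsum1 : ∑ j, (L j)ᴴ * L j = S + (c:ℂ) • D := by
      rw [hsplit (fun X => Xᴴ * X)]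
      congr 1
      rw [show (∑ m, ∑ k, (E m k)ᴴ * E m k)
          = ∑ m, ∑ k, ((c:ℂ) * τ m m * D k k) • Matrix.single k k 1 from
        Finset.sum_congr rfl fun m _ => Finset.sum_congr rfl fun k _ => hEhE m k]
      rw [Finset.sum_comm]
      conv_rhs => rw [hDstd]
      rw [Finset.smul_sum]
      refine Finset.sum_congr rfl fun k _ => ?_
      rw [← Finset.sum_smul, smul_smul]
      congr 1
      calc ∑ m, (c:ℂ) * τ m m * D k k = (∑ m, τ m m) * ((c:ℂ) * D k k) := by
            rw [Finset.sum_mul]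
            exact Finset.sum_congr rfl fun m _ => by ring
        _ = (c:ℂ) * D k k := by rw [hτsum, one_mul]
    rw [hsum1]
    have heq : (1 : Matrix (Fin d) (Fin d) ℂ) - (S + (c:ℂ) • D)
        = Matrix.diagonal (fun k => (((1 - c) * (D k k).re : ℝ) : ℂ)) := by
      have h1 : (1 : Matrix (Fin d) (Fin d) ℂ) - (S + (c:ℂ) • D) = D - (c:ℂ) • D := by
        rw [sub_add_eq_sub_sub, hD]
      rw [h1]
      ext i j
      by_cases h : i = j
      · subst h
        rw [Matrix.sub_apply, Matrix.smul_apply, Matrix.diagonal_apply_eq, smul_eq_mul,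
          (hDkk i).1, Complex.ofReal_mul, Complex.ofReal_sub, Complex.ofReal_one]
        simp only [Complex.ofReal_re]
        ring
      · rw [Matrix.sub_apply, Matrix.smul_apply, Matrix.diagonal_apply_ne _ h,
          hDoff i j h, smul_zero, sub_zero]
    rw [heq]
    refine Matrix.posSemidef_diagonal_iff.mpr fun k => ?_
    rw [Complex.zero_le_real]
    exact mul_nonneg (by linarith) (hDkk k).2
  · have hEρE : ∀ m k, E m k * ρ * (E m k)ᴴ
        = ((c:ℂ) * τ m m * D k k * ρ k k) • Matrix.single m m 1 := by
      intro m k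
      rw [hE]
      simp only []
      rw [Matrix.conjTranspose_smul, stdB_conjT, Matrix.smul_mul, Matrix.smul_mul,
        Matrix.mul_smul, stdB_sandwich, smul_smul, smul_smul, ← hα2 m k]
      congr 1
      simp only [Complex.star_def, Complex.conj_ofReal]
    rw [hsplit (fun X => X * ρ * Xᴴ), hKsum]
    congr 1
    rw [show (∑ m, ∑ k, E m k * ρ * (E m k)ᴴ)
        = ∑ m, ∑ k, ((c:ℂ) * τ m m * D k k * ρ k k) • Matrix.single m m 1 from
      Finset.sum_congr rfl fun m _ => Finset.sum_congr rfl fun k _ => hEρE m k]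
    conv_rhs => rw [hτstd]
    rw [Finset.smul_sum]
    refine Finset.sum_congr rfl fun m _ => ?_
    rw [← Finset.sum_smul, smul_smul]
    congr 1
    calc ∑ k, (c:ℂ) * τ m m * D k k * ρ k k = ((c:ℂ) * τ m m) * ∑ k, D k k * ρ k k := by
          rw [Finset.mul_sum]
          exact Finset.sum_congr rfl fun k _ => by ring
      _ = (q:ℂ) * τ m m := by rw [hkey, ← hcqC]; ring
end

section
/- Let K be a 2×2 complex matrix that is an incoherent Kraus operator (every column of K has at most one nonzero entry). Then either K is strictly incoherent (every row of K also has at most one nonzero entry), or the matrix K X Kᴴ is diagonal for every 2×2 complex matrix X. (Dichotomy for incoherent qubit Kraus operators: each one is either strictly incoherent or has incoherent output.) -/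
open Matrix BigOperators
open scoped Kronecker Classical ComplexOrder

/-- Dichotomy for incoherent qubit Kraus operators: each one is either strictly
incoherent, or its output `K X Kᴴ` is diagonal for every input `X`. -/
theorem qubit_incoherent_kraus_dichotomy (K : Matrix (Fin 2) (Fin 2) ℂ)
    (hK : IsIncoherentKraus K) :
    IsSIKraus K ∨ ∀ X : Matrix (Fin 2) (Fin 2) ℂ, (K * X * Kᴴ).IsDiag := by
  by_cases hSI : IsSIKraus K
  · exact Or.inl hSI
  · right
    have hrow : ∃ i j j', K i j ≠ 0 ∧ K i j' ≠ 0 ∧ j ≠ j' := by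
      by_contra h
      push_neg at h
      exact hSI ⟨fun i j j' h1 h2 => by
        by_contra hne
        exact hne (h i j j' h1 h2), hK⟩
    obtain ⟨i, j, j', hj, hj', hjj⟩ := hrow
    have hc : ∀ c : Fin 2, K i c ≠ 0 := by
      intro c
      rcases eq_or_ne c j with rfl | h
      · exact hj
      · have : c = j' := by omega
        subst this; exact hj'
    have hzero : ∀ a : Fin 2, a ≠ i → ∀ c, K a c = 0 := by
      intro a ha c
      by_contra h
      exact ha (hK c a i h (hc c))
    intro X a b hab
    have hai : a ≠ i ∨ b ≠ i := by
      rcases eq_or_ne a i with rfl | h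
      · exact Or.inr fun hb => hab (hb.symm)
      · exact Or.inl h
    show (K * X * Kᴴ) a b = 0
    simp only [Matrix.mul_apply, Matrix.conjTranspose_apply]
    rcases hai with h | h
    · apply Finset.sum_eq_zero
      intro k _
      rw [Finset.sum_eq_zero (fun c _ => by rw [hzero a h c, zero_mul]), zero_mul]
    · apply Finset.sum_eq_zero
      intro k _
      rw [hzero b h k, star_zero, mul_zero]
end

section
/- Let ρ be a density matrix on ℂ^{dA} ⊗ ℂ^{dB} (a positive semidefinite matrix of trace 1 indexed by pairs in Fin dA × Fin dB) with marginals ρ^A = Tr_B ρ and ρ^B = Tr_A ρ, and suppose ρ is correlated, i.e. ρ ≠ ρ^A ⊗ ρ^B. Then there exists a Hermitian dA×dA matrix M with 0 ⪯ M ⪯ I such that t := Tr[(M ⊗ I)·ρ] is a positive real number and Tr_A[(M ⊗ I)·ρ] ≠ t·ρ^B, i.e. the normalized post-measurement state on B differs from ρ^B. -/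
open Matrix BigOperators
open scoped Kronecker Classical ComplexOrder

namespace SteerAux

lemma psd_trace_nonneg {m : Type*} [Fintype m] [DecidableEq m] {A : Matrix m m ℂ}
    (hA : A.PosSemidef) : 0 ≤ A.trace := by
  apply Finset.sum_nonneg
  intro i _
  have := hA.dotProduct_mulVec_nonneg (Pi.single i 1)
  simpa [Matrix.mulVec_single, dotProduct, Pi.single_apply, apply_ite] using this

lemma exists_eq_ct_mul {m : Type*} [Fintype m] [DecidableEq m] {A : Matrix m m ℂ}
    (hA : A.PosSemidef) : ∃ B : Matrix m m ℂ, A = Bᴴ * B := by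
  open scoped MatrixOrder in
  obtain ⟨a, ha⟩ := CStarAlgebra.nonneg_iff_eq_star_mul_self.mp hA.nonneg
  exact ⟨a, by simpa [star_eq_conjTranspose] using ha⟩

lemma trace_mul_nonneg {m : Type*} [Fintype m] [DecidableEq m] {A B : Matrix m m ℂ}
    (hA : A.PosSemidef) (hB : B.PosSemidef) : 0 ≤ (A * B).trace := by
  obtain ⟨C, hC⟩ := exists_eq_ct_mul hA
  have h : (A * B).trace = (C * B * Cᴴ).trace := by
    rw [hC]; exact (Matrix.trace_mul_cycle C B Cᴴ).symm
  rw [h]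
  exact psd_trace_nonneg (hB.mul_mul_conjTranspose_same C)

lemma kron_conjTranspose {m n : Type*} [Fintype m] [Fintype n]
    (A : Matrix m m ℂ) (B : Matrix n n ℂ) : (A ⊗ₖ B)ᴴ = Aᴴ ⊗ₖ Bᴴ := by
  ext ⟨i, j⟩ ⟨k, l⟩
  simp [Matrix.conjTranspose_apply, Matrix.kroneckerMap_apply, star_mul']

lemma kron_one_psd {dA dB : ℕ} {M : Matrix (Fin dA) (Fin dA) ℂ} (hM : M.PosSemidef) :
    (M ⊗ₖ (1 : Matrix (Fin dB) (Fin dB) ℂ)).PosSemidef := by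
  obtain ⟨C, hC⟩ := exists_eq_ct_mul hM
  have h : M ⊗ₖ (1 : Matrix (Fin dB) (Fin dB) ℂ) = (C ⊗ₖ 1)ᴴ * (C ⊗ₖ 1) := by
    rw [hC, kron_conjTranspose, Matrix.conjTranspose_one, ← Matrix.mul_kronecker_mul, one_mul]
  rw [h]
  exact Matrix.posSemidef_conjTranspose_mul_self _

lemma smul_psd {d : ℕ} {A : Matrix (Fin d) (Fin d) ℂ} (hA : A.PosSemidef) (r : ℝ) (hr : 0 ≤ r) :
    ((r : ℂ) • A).PosSemidef := by
  rw [Matrix.posSemidef_iff_dotProduct_mulVec]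
  constructor
  · rw [Matrix.IsHermitian, Matrix.conjTranspose_smul, hA.1]
    congr 1
    simp [Complex.star_def, Complex.conj_ofReal]
  · intro x
    have h := hA.dotProduct_mulVec_nonneg x
    rw [Matrix.smul_mulVec, dotProduct_smul]
    rw [Complex.nonneg_iff] at h ⊢
    constructor
    · simpa [Complex.re_ofReal_mul] using mul_nonneg hr h.1
    · simp [Complex.im_ofReal_mul, ← h.2]

lemma qform {d : ℕ} (A : Matrix (Fin d) (Fin d) ℂ) (x : Fin d → ℂ) :
    star x ⬝ᵥ A.mulVec x = ∑ a, ∑ b, A a b * (star (x a) * x b) := by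
  simp [dotProduct, Matrix.mulVec, Finset.mul_sum]
  apply Finset.sum_congr rfl; intro a _
  apply Finset.sum_congr rfl; intro b _
  ring

lemma sum2_add {d : ℕ} (A B : Matrix (Fin d) (Fin d) ℂ) (f : Fin d → Fin d → ℂ) :
    ∑ a, ∑ b, (A + B) a b * f a b
      = (∑ a, ∑ b, A a b * f a b) + ∑ a, ∑ b, B a b * f a b := by
  simp [Matrix.add_apply, add_mul, Finset.sum_add_distrib]

lemma sum2_smul {d : ℕ} (c : ℂ) (A : Matrix (Fin d) (Fin d) ℂ) (f : Fin d → Fin d → ℂ) :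
    ∑ a, ∑ b, (c • A) a b * f a b = c * ∑ a, ∑ b, A a b * f a b := by
  simp [Matrix.smul_apply, Finset.mul_sum, mul_assoc]

lemma sum2_one {d : ℕ} (f : Fin d → Fin d → ℂ) :
    ∑ a, ∑ b, (1 : Matrix (Fin d) (Fin d) ℂ) a b * f a b = ∑ a, f a a := by
  simp [Matrix.one_apply, ite_mul, Finset.sum_ite_eq]

lemma sum2_std {d : ℕ} (i k : Fin d) (f : Fin d → Fin d → ℂ) :
    ∑ a, ∑ b, Matrix.single i k (1 : ℂ) a b * f a b = f i k := by
  simp [Matrix.single, ite_and, ite_mul, Finset.sum_ite_eq]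

lemma cand_psd {d : ℕ} (i k : Fin d) (hik : i ≠ k) (c : ℂ) (hc : ‖c‖ ≤ 1) :
    ((1 : Matrix (Fin d) (Fin d) ℂ) + c • Matrix.single i k 1
      + (starRingEnd ℂ) c • Matrix.single k i 1).PosSemidef := by
  rw [Matrix.posSemidef_iff_dotProduct_mulVec]
  constructor
  · ext a b
    simp only [Matrix.conjTranspose_apply, Matrix.add_apply, Matrix.smul_apply,
      Matrix.one_apply, Matrix.single, Matrix.of_apply, smul_eq_mul, star_add, star_mul',
      star_one, star_zero, RCLike.star_def, Complex.conj_conj, apply_ite (starRingEnd ℂ),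
      _root_.map_one, map_zero]
    by_cases hab : a = b <;> by_cases hia : i = a <;> by_cases hkb : k = b <;>
      by_cases hka : k = a <;> by_cases hib : i = b <;> simp_all <;>
      first
        | exact Ne.symm hab
        | ring_nf
  · intro x
    rw [qform, sum2_add, sum2_add, sum2_smul, sum2_smul, sum2_one, sum2_std, sum2_std]
    have hz : star (x k) * x i = star (star (x i) * x k) := by
      rw [star_mul', star_star]; ring
    rw [hz]
    set z := star (x i) * x k with hzdef
    have hS : ∀ a, star (x a) * x a = (Complex.normSq (x a) : ℂ) := by
      intro a
      rw [RCLike.star_def]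
      exact Complex.normSq_eq_conj_mul_self.symm
    simp only [hS]
    have hstar : (starRingEnd ℂ) c * star z = star (c * z) := by
      conv_rhs => rw [star_mul']
      rfl
    have hcz : c * z + star (c * z) = ((2 * (c * z).re : ℝ) : ℂ) := by
      rw [RCLike.star_def, Complex.add_conj]
    have key : (∑ a, (Complex.normSq (x a) : ℂ)) + c * z + (starRingEnd ℂ) c * star z
        = ((∑ a, Complex.normSq (x a)) + 2 * (c * z).re : ℝ) := by
      rw [hstar, add_assoc, hcz]; push_cast; ring
    rw [key, Complex.zero_le_real]
    have hbound : -(‖x i‖ * ‖x k‖) ≤ (c * z).re := by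
      have h1 : -‖c * z‖ ≤ (c * z).re := by
        have ha := Complex.abs_re_le_norm (c * z)
        have hb := neg_abs_le ((c * z).re)
        linarith [abs_nonneg ((c * z).re)]
      have h2 : ‖c * z‖ ≤ ‖x i‖ * ‖x k‖ := by
        rw [norm_mul, hzdef, norm_mul, RCLike.star_def, Complex.norm_conj]
        calc ‖c‖ * (‖x i‖ * ‖x k‖)
            ≤ 1 * (‖x i‖ * ‖x k‖) := by
              apply mul_le_mul_of_nonneg_right hc; positivity
          _ = _ := one_mul _
      linarith
    have hsub : Complex.normSq (x i) + Complex.normSq (x k) ≤ ∑ a, Complex.normSq (x a) := by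
      have h := Finset.sum_le_sum_of_subset_of_nonneg (f := fun a => Complex.normSq (x a))
        (Finset.subset_univ ({i, k} : Finset (Fin d))) (fun _ _ _ => Complex.normSq_nonneg _)
      simpa [Finset.sum_pair hik] using h
    have e1 : Complex.normSq (x i) = ‖x i‖ ^ 2 := (Complex.sq_norm (x i)).symm
    have e2 : Complex.normSq (x k) = ‖x k‖ ^ 2 := (Complex.sq_norm (x k)).symm
    nlinarith [sq_nonneg (‖x i‖ - ‖x k‖),
      norm_nonneg (x i), norm_nonneg (x k)]

lemma std_herm {d : ℕ} (i : Fin d) : (Matrix.single i i (1 : ℂ))ᴴ = Matrix.single i i 1 := by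
  ext a b
  simp only [Matrix.conjTranspose_apply, Matrix.single, Matrix.of_apply,
    apply_ite (star : ℂ → ℂ), star_one, star_zero]
  by_cases h1 : i = a <;> by_cases h2 : i = b <;> simp_all

lemma cand_psd_diag {d : ℕ} (i : Fin d) (r : ℝ) (hr : -1 ≤ r) :
    ((1 : Matrix (Fin d) (Fin d) ℂ) + (r : ℂ) • Matrix.single i i 1).PosSemidef := by
  rw [Matrix.posSemidef_iff_dotProduct_mulVec]
  constructor
  · rw [Matrix.IsHermitian, Matrix.conjTranspose_add, Matrix.conjTranspose_smul,
      Matrix.conjTranspose_one, std_herm]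
    congr 1
    congr 1
    simp [Complex.star_def, Complex.conj_ofReal]
  · intro x
    rw [qform, sum2_add, sum2_smul, sum2_one, sum2_std]
    have hS : ∀ a, star (x a) * x a = (Complex.normSq (x a) : ℂ) := by
      intro a
      rw [RCLike.star_def]
      exact Complex.normSq_eq_conj_mul_self.symm
    simp only [hS]
    have key : (∑ a, (Complex.normSq (x a) : ℂ)) + (r : ℂ) * (Complex.normSq (x i) : ℂ)
        = ((∑ a, Complex.normSq (x a)) + r * Complex.normSq (x i) : ℝ) := by
      push_cast; ring
    rw [key, Complex.zero_le_real]
    have hsub : Complex.normSq (x i) ≤ ∑ a, Complex.normSq (x a) := by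
      have h := Finset.sum_le_sum_of_subset_of_nonneg (f := fun a => Complex.normSq (x a))
        (Finset.subset_univ ({i} : Finset (Fin d))) (fun _ _ _ => Complex.normSq_nonneg _)
      simpa using h
    nlinarith [Complex.normSq_nonneg (x i)]

lemma ptraceA_smul {dA dB : ℕ} (c : ℂ) (X : Matrix (Fin dA × Fin dB) (Fin dA × Fin dB) ℂ) :
    ptraceA (c • X) = c • ptraceA X := by
  ext j j'
  simp [ptraceA, Finset.mul_sum]

lemma ptraceA_add {dA dB : ℕ} (X Y : Matrix (Fin dA × Fin dB) (Fin dA × Fin dB) ℂ) :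
    ptraceA (X + Y) = ptraceA X + ptraceA Y := by
  ext j j'
  simp [ptraceA, Finset.sum_add_distrib]

lemma Lam_apply {dA dB : ℕ} (ρ : Matrix (Fin dA × Fin dB) (Fin dA × Fin dB) ℂ)
    (X : Matrix (Fin dA) (Fin dA) ℂ) (j j' : Fin dB) :
    ptraceA ((X ⊗ₖ (1 : Matrix (Fin dB) (Fin dB) ℂ)) * ρ) j j'
      = ∑ a, ∑ b, X a b * ρ (b, j) (a, j') := by
  simp [ptraceA, Matrix.mul_apply, Fintype.sum_prod_type, Matrix.kroneckerMap_apply,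
    Matrix.one_apply, mul_ite, mul_one, mul_zero, ite_mul, zero_mul, Finset.sum_ite_eq,
    Finset.sum_ite_eq']

lemma tau_apply {dA dB : ℕ} (ρ : Matrix (Fin dA × Fin dB) (Fin dA × Fin dB) ℂ)
    (X : Matrix (Fin dA) (Fin dA) ℂ) :
    ((X ⊗ₖ (1 : Matrix (Fin dB) (Fin dB) ℂ)) * ρ).trace
      = ∑ a, ∑ b, X a b * ptraceB ρ b a := by
  have e : ∀ a : Fin dA, (∑ j : Fin dB, ∑ b : Fin dA, X a b * ρ (b, j) (a, j))
      = ∑ b : Fin dA, X a b * ptraceB ρ b a := by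
    intro a
    rw [Finset.sum_comm]
    apply Finset.sum_congr rfl; intro b _
    rw [← Finset.mul_sum]
    rfl
  calc ((X ⊗ₖ (1 : Matrix (Fin dB) (Fin dB) ℂ)) * ρ).trace
      = ∑ j : Fin dB, ∑ a : Fin dA, ∑ b : Fin dA, X a b * ρ (b, j) (a, j) := by
        simp only [Matrix.trace, Matrix.diag, Matrix.mul_apply, Fintype.sum_prod_type,
          Matrix.kroneckerMap_apply, Matrix.one_apply, mul_ite, mul_one, mul_zero, ite_mul,
          zero_mul, Finset.sum_ite_eq, Finset.sum_ite_eq', Finset.mem_univ, if_true]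
        rw [Finset.sum_comm]
    _ = ∑ a : Fin dA, ∑ j : Fin dB, ∑ b : Fin dA, X a b * ρ (b, j) (a, j) := Finset.sum_comm
    _ = ∑ a : Fin dA, ∑ b : Fin dA, X a b * ptraceB ρ b a :=
        Finset.sum_congr rfl (fun a _ => e a)

lemma expandM {dA dB : ℕ} (ρ : Matrix (Fin dA × Fin dB) (Fin dA × Fin dB) ℂ)
    (X : Matrix (Fin dA) (Fin dA) ℂ) :
    (((4 : ℂ)⁻¹ • ((2 : ℂ) • (1 : Matrix (Fin dA) (Fin dA) ℂ) + X))
        ⊗ₖ (1 : Matrix (Fin dB) (Fin dB) ℂ)) * ρ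
      = (4 : ℂ)⁻¹ • ((2 : ℂ) • ρ + (X ⊗ₖ (1 : Matrix (Fin dB) (Fin dB) ℂ)) * ρ) := by
  rw [Matrix.smul_kronecker, Matrix.add_kronecker, Matrix.smul_kronecker,
    Matrix.one_kronecker_one, Matrix.smul_mul, Matrix.add_mul, Matrix.smul_mul, Matrix.one_mul]

lemma key_step {dA dB : ℕ} (ρ : Matrix (Fin dA × Fin dB) (Fin dA × Fin dB) ℂ)
    (hρ : ρ.PosSemidef) (htr : ρ.trace = 1)
    (hno : ∀ M : Matrix (Fin dA) (Fin dA) ℂ, M.IsHermitian → M.PosSemidef →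
      ((1 : Matrix (Fin dA) (Fin dA) ℂ) - M).PosSemidef →
      ∀ t : ℝ, 0 < t → ((M ⊗ₖ (1 : Matrix (Fin dB) (Fin dB) ℂ)) * ρ).trace = (t : ℂ) →
        ptraceA ((M ⊗ₖ (1 : Matrix (Fin dB) (Fin dB) ℂ)) * ρ) = (t : ℂ) • ptraceA ρ)
    (X : Matrix (Fin dA) (Fin dA) ℂ)
    (h1 : ((1 : Matrix (Fin dA) (Fin dA) ℂ) + X).PosSemidef)
    (h2 : ((2 : ℂ) • (1 : Matrix (Fin dA) (Fin dA) ℂ) - X).PosSemidef) :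
    ptraceA ((X ⊗ₖ (1 : Matrix (Fin dB) (Fin dB) ℂ)) * ρ)
      = ((X ⊗ₖ (1 : Matrix (Fin dB) (Fin dB) ℂ)) * ρ).trace • ptraceA ρ := by
  have c4 : ((4⁻¹ : ℝ) : ℂ) = (4 : ℂ)⁻¹ := by norm_num
  set M : Matrix (Fin dA) (Fin dA) ℂ :=
    (4 : ℂ)⁻¹ • ((2 : ℂ) • (1 : Matrix (Fin dA) (Fin dA) ℂ) + X) with hMdef
  have hM_eq1 : M = ((4⁻¹ : ℝ) : ℂ) • (((1 : Matrix (Fin dA) (Fin dA) ℂ) + X) + 1) := by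
    rw [hMdef, c4]; module
  have hMpsd : M.PosSemidef := by
    rw [hM_eq1]
    exact smul_psd (h1.add Matrix.PosSemidef.one) _ (by norm_num)
  have hM1 : ((1 : Matrix (Fin dA) (Fin dA) ℂ) - M).PosSemidef := by
    have e : (1 : Matrix (Fin dA) (Fin dA) ℂ) - M
        = ((4⁻¹ : ℝ) : ℂ) • ((2 : ℂ) • (1 : Matrix (Fin dA) (Fin dA) ℂ) - X) := by
      rw [hMdef, c4]; module
    rw [e]
    exact smul_psd h2 _ (by norm_num)
  have hτ' : 0 ≤ ((((1 : Matrix (Fin dA) (Fin dA) ℂ) + X)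
      ⊗ₖ (1 : Matrix (Fin dB) (Fin dB) ℂ)) * ρ).trace :=
    trace_mul_nonneg (kron_one_psd h1) hρ
  have hexp1 : (((1 : Matrix (Fin dA) (Fin dA) ℂ) + X)
      ⊗ₖ (1 : Matrix (Fin dB) (Fin dB) ℂ)) * ρ
      = ρ + (X ⊗ₖ (1 : Matrix (Fin dB) (Fin dB) ℂ)) * ρ := by
    rw [Matrix.add_kronecker, Matrix.one_kronecker_one, Matrix.add_mul, Matrix.one_mul]
  rw [hexp1, Matrix.trace_add, htr] at hτ'
  set τ : ℂ := ((X ⊗ₖ (1 : Matrix (Fin dB) (Fin dB) ℂ)) * ρ).trace with hτdef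
  obtain ⟨hre, him⟩ := Complex.nonneg_iff.mp hτ'
  have him' : τ.im = 0 := by simpa using him.symm
  have hre' : -1 ≤ τ.re := by
    rw [Complex.add_re, Complex.one_re] at hre
    linarith
  have hτre : ((τ.re : ℝ) : ℂ) = τ := Complex.ext rfl (by simp [him'])
  set t : ℝ := (2 + τ.re) / 4 with htdef
  have htpos : 0 < t := by rw [htdef]; linarith
  have htrace : ((M ⊗ₖ (1 : Matrix (Fin dB) (Fin dB) ℂ)) * ρ).trace = (t : ℂ) := by
    rw [hMdef, expandM, Matrix.trace_smul, Matrix.trace_add, Matrix.trace_smul, htr, ← hτdef,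
      ← hτre, htdef]
    simp only [smul_eq_mul]
    push_cast
    ring
  have hmain := hno M hMpsd.isHermitian hMpsd hM1 t htpos htrace
  rw [hMdef, expandM, ptraceA_smul, ptraceA_add, ptraceA_smul] at hmain
  have ht2 : (t : ℂ) = (4 : ℂ)⁻¹ * (2 + τ) := by
    rw [← hτre, htdef]
    push_cast
    ring
  ext j j'
  have h := congrFun (congrFun hmain j) j'
  simp only [Matrix.smul_apply, Matrix.add_apply, smul_eq_mul] at h ⊢
  linear_combination (4 : ℂ) * h + 4 * ptraceA ρ j j' * ht2

end SteerAux

/-- For any correlated bipartite state `ρ ≠ ρᴬ ⊗ ρᴮ` there is a POVM element `M` on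
Alice's side occurring with positive probability whose normalized post-measurement state
on Bob's side differs from `ρᴮ`. -/
theorem correlated_state_admits_steering_measurement (dA dB : ℕ)
    (ρ : Matrix (Fin dA × Fin dB) (Fin dA × Fin dB) ℂ)
    (hρ : ρ.PosSemidef) (htr : ρ.trace = 1)
    (hcorr : ρ ≠ ptraceB ρ ⊗ₖ ptraceA ρ) :
    ∃ M : Matrix (Fin dA) (Fin dA) ℂ, M.IsHermitian ∧ M.PosSemidef ∧
      ((1 : Matrix (Fin dA) (Fin dA) ℂ) - M).PosSemidef ∧
      ∃ t : ℝ, 0 < t ∧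
        ((M ⊗ₖ (1 : Matrix (Fin dB) (Fin dB) ℂ)) * ρ).trace = (t : ℂ) ∧
        ptraceA ((M ⊗ₖ (1 : Matrix (Fin dB) (Fin dB) ℂ)) * ρ) ≠ (t : ℂ) • ptraceA ρ := by
  by_contra hno
  push_neg at hno
  apply hcorr
  ext ⟨i1, j1⟩ ⟨i2, j2⟩
  rw [Matrix.kroneckerMap_apply]
  by_cases hii : i1 = i2
  · subst hii
    have h1 : ((1 : Matrix (Fin dA) (Fin dA) ℂ) + Matrix.single i1 i1 1).PosSemidef := by
      have := SteerAux.cand_psd_diag i1 1 (by norm_num)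
      simpa using this
    have h2 : ((2 : ℂ) • (1 : Matrix (Fin dA) (Fin dA) ℂ)
        - Matrix.single i1 i1 1).PosSemidef := by
      have base := SteerAux.smul_psd (SteerAux.cand_psd_diag i1 (-2⁻¹) (by norm_num)) 2
        (by norm_num)
      have e : (2 : ℂ) • (1 : Matrix (Fin dA) (Fin dA) ℂ) - Matrix.single i1 i1 1
          = ((2 : ℝ) : ℂ) • ((1 : Matrix (Fin dA) (Fin dA) ℂ)
            + ((-2⁻¹ : ℝ) : ℂ) • Matrix.single i1 i1 1) := by
        push_cast
        module
      rw [e]; exact base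
    have hkey := SteerAux.key_step ρ hρ htr hno (Matrix.single i1 i1 1) h1 h2
    have h := congrFun (congrFun hkey j1) j2
    rw [SteerAux.Lam_apply, Matrix.smul_apply, SteerAux.tau_apply, smul_eq_mul,
      SteerAux.sum2_std, SteerAux.sum2_std] at h
    exact h
  · have hne : i2 ≠ i1 := fun h => hii h.symm
    -- first observable : E i2 i1 + E i1 i2
    have h1a : ((1 : Matrix (Fin dA) (Fin dA) ℂ)
        + (Matrix.single i2 i1 (1 : ℂ) + Matrix.single i1 i2 1)).PosSemidef := by
      have := SteerAux.cand_psd i2 i1 hne 1 (by norm_num)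
      simpa [add_assoc] using this
    have h2a : ((2 : ℂ) • (1 : Matrix (Fin dA) (Fin dA) ℂ)
        - (Matrix.single i2 i1 (1 : ℂ) + Matrix.single i1 i2 1)).PosSemidef := by
      have base := SteerAux.smul_psd
        (SteerAux.cand_psd i2 i1 hne (-2⁻¹) (by norm_num [norm_neg, norm_inv])) 2
        (by norm_num)
      have hconj : (starRingEnd ℂ) (-2⁻¹ : ℂ) = -2⁻¹ := by simp [map_ofNat]
      rw [hconj] at base
      have e : (2 : ℂ) • (1 : Matrix (Fin dA) (Fin dA) ℂ)
          - (Matrix.single i2 i1 (1 : ℂ) + Matrix.single i1 i2 1)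
          = ((2 : ℝ) : ℂ) • ((1 : Matrix (Fin dA) (Fin dA) ℂ)
            + (-2⁻¹ : ℂ) • Matrix.single i2 i1 1 + (-2⁻¹ : ℂ) • Matrix.single i1 i2 1) := by
        push_cast
        module
      rw [e]; exact base
    have hkey1 := SteerAux.key_step ρ hρ htr hno
      (Matrix.single i2 i1 (1 : ℂ) + Matrix.single i1 i2 1) h1a h2a
    have h := congrFun (congrFun hkey1 j1) j2
    rw [SteerAux.Lam_apply, Matrix.smul_apply, SteerAux.tau_apply, smul_eq_mul,
      SteerAux.sum2_add, SteerAux.sum2_add, SteerAux.sum2_std, SteerAux.sum2_std,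
      SteerAux.sum2_std, SteerAux.sum2_std] at h
    -- second observable : I • E i2 i1 + (-I) • E i1 i2
    have h1b : ((1 : Matrix (Fin dA) (Fin dA) ℂ)
        + (Complex.I • Matrix.single i2 i1 (1 : ℂ)
          + (-Complex.I) • Matrix.single i1 i2 1)).PosSemidef := by
      have := SteerAux.cand_psd i2 i1 hne Complex.I (by norm_num [Complex.norm_I])
      rw [Complex.conj_I] at this
      simpa [add_assoc] using this
    have h2b : ((2 : ℂ) • (1 : Matrix (Fin dA) (Fin dA) ℂ)
        - (Complex.I • Matrix.single i2 i1 (1 : ℂ)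
          + (-Complex.I) • Matrix.single i1 i2 1)).PosSemidef := by
      have base := SteerAux.smul_psd
        (SteerAux.cand_psd i2 i1 hne (-(Complex.I)/2)
          (by rw [norm_div, norm_neg, Complex.norm_I]; norm_num)) 2 (by norm_num)
      have hconj : (starRingEnd ℂ) (-(Complex.I)/2) = Complex.I/2 := by simp [map_ofNat]
      rw [hconj] at base
      have e : (2 : ℂ) • (1 : Matrix (Fin dA) (Fin dA) ℂ)
          - (Complex.I • Matrix.single i2 i1 (1 : ℂ)
            + (-Complex.I) • Matrix.single i1 i2 1)
          = ((2 : ℝ) : ℂ) • ((1 : Matrix (Fin dA) (Fin dA) ℂ)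
            + (-(Complex.I)/2) • Matrix.single i2 i1 1
            + (Complex.I/2) • Matrix.single i1 i2 1) := by
        push_cast
        module
      rw [e]; exact base
    have hkey2 := SteerAux.key_step ρ hρ htr hno
      (Complex.I • Matrix.single i2 i1 (1 : ℂ) + (-Complex.I) • Matrix.single i1 i2 1) h1b h2b
    have h' := congrFun (congrFun hkey2 j1) j2
    rw [SteerAux.Lam_apply, Matrix.smul_apply, SteerAux.tau_apply, smul_eq_mul,
      SteerAux.sum2_add, SteerAux.sum2_add, SteerAux.sum2_smul, SteerAux.sum2_smul,
      SteerAux.sum2_smul, SteerAux.sum2_smul, SteerAux.sum2_std, SteerAux.sum2_std,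
      SteerAux.sum2_std, SteerAux.sum2_std] at h'
    linear_combination h / 2 - Complex.I / 2 * h'
      + (ρ (i1, j1) (i2, j2) / 2 - ptraceB ρ i1 i2 * ptraceA ρ j1 j2 / 2
        + ptraceB ρ i2 i1 * ptraceA ρ j1 j2 / 2 - ρ (i2, j1) (i1, j2) / 2) * Complex.I_sq
end

section
/- Let ρ be a density matrix on ℂ^{dA} ⊗ ℂ² (indexed by Fin dA × Fin 2) which is (i) correlated: ρ ≠ (Tr_B ρ) ⊗ (Tr_A ρ), and (ii) not quantum-incoherent with respect to the standard basis on the second (qubit) factor: there exist indices a, a' ∈ Fin dA and i ≠ j in Fin 2 with ρ((a,i),(a',j)) ≠ 0. Let (r_x,r_y,r_z) be the Bloch vector of ρ^B = Tr_A ρ and r = √(r_x²+r_y²). Then there exists a Hermitian dA×dA matrix M with 0 ⪯ M ⪯ I such that t := Tr[(M ⊗ I)·ρ] is a positive real number and the normalized state σ = Tr_A[(M ⊗ I)·ρ]/t, with Bloch vector (s_x,s_y,s_z) and s = √(s_x²+s_y²), satisfies r²·s_z² + (1−r_z²)·s² > r², i.e. σ lies strictly outside the set of states reachable from ρ^B by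 stochastic incoherent operations. (Correlations enhance Bob's incoherent conversion possibilities whenever the shared state is correlated and not quantum-incoherent.) -/
open Matrix BigOperators
open scoped Kronecker Classical ComplexOrder

namespace CEIC

variable {dA dB : ℕ}

lemma ptraceA_apply (X : Matrix (Fin dA × Fin dB) (Fin dA × Fin dB) ℂ) (j j' : Fin dB) :
    ptraceA X j j' = ∑ i, X (i, j) (i, j') := rfl

lemma ptraceA_trace (X : Matrix (Fin dA × Fin dB) (Fin dA × Fin dB) ℂ) :
    (ptraceA X).trace = X.trace := by
  simp only [Matrix.trace, Matrix.diag, ptraceA]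
  rw [Fintype.sum_prod_type]
  exact Finset.sum_comm

lemma ptraceA_posSemidef {X : Matrix (Fin dA × Fin dB) (Fin dA × Fin dB) ℂ}
    (hX : X.PosSemidef) : (ptraceA X).PosSemidef := by
  refine Matrix.posSemidef_iff_dotProduct_mulVec.mpr ⟨?_, ?_⟩
  · ext j j'
    simp only [conjTranspose_apply, ptraceA, star_sum]
    exact Finset.sum_congr rfl fun i _ => hX.1.apply _ _
  · intro y
    have e1 : ∀ u : Fin dA,
        dotProduct (star (fun p : Fin dA × Fin dB => if p.1 = u then y p.2 else 0))
          (X *ᵥ (fun p : Fin dA × Fin dB => if p.1 = u then y p.2 else 0))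
        = ∑ j, ∑ j', star (y j) * X (u, j) (u, j') * y j' := by
      intro u
      simp only [dotProduct, mulVec, Fintype.sum_prod_type, Pi.star_apply, apply_ite star,
        star_zero, ite_mul, mul_ite, zero_mul, mul_zero, Finset.sum_ite_irrel,
        Finset.sum_const_zero, Finset.sum_ite_eq, Finset.sum_ite_eq', Finset.mem_univ, if_true]
      refine Finset.sum_congr rfl fun j _ => ?_
      rw [Finset.mul_sum]
      exact Finset.sum_congr rfl fun j' _ => by ring
    have e2 : dotProduct (star y) ((ptraceA X) *ᵥ y)
        = ∑ j, ∑ j', ∑ u : Fin dA, star (y j) * X (u, j) (u, j') * y j' := by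
      simp only [dotProduct, mulVec, ptraceA, Finset.mul_sum, Finset.sum_mul, Pi.star_apply]
      exact Finset.sum_congr rfl fun j _ => Finset.sum_congr rfl fun j' _ =>
        Finset.sum_congr rfl fun u _ => by ring
    have e3 : dotProduct (star y) ((ptraceA X) *ᵥ y)
        = ∑ u : Fin dA,
          dotProduct (star (fun p : Fin dA × Fin dB => if p.1 = u then y p.2 else 0))
            (X *ᵥ (fun p : Fin dA × Fin dB => if p.1 = u then y p.2 else 0)) := by
      rw [e2]
      have hsw1 : ∀ f : Fin dB → Fin dA → ℂ, ∑ a, ∑ b, f a b = ∑ b, ∑ a, f a b :=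
        fun f => Finset.sum_comm
      have hsw2 : ∀ f : Fin dB → Fin dB → Fin dA → ℂ,
          (∑ a, ∑ b, ∑ c, f a b c) = ∑ c, ∑ a, ∑ b, f a b c := by
        intro f
        rw [show (∑ a, ∑ b, ∑ c, f a b c) = ∑ a, ∑ c, ∑ b, (fun a c b => f a b c) a c b from
          Finset.sum_congr rfl fun a _ => hsw1 _]
        exact Finset.sum_comm
      rw [hsw2 (fun j j' u => star (y j) * X (u, j) (u, j') * y j')]
      exact Finset.sum_congr rfl fun u _ => (e1 u).symm
    rw [e3]
    exact Finset.sum_nonneg fun u _ => hX.dotProduct_mulVec_nonneg _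

lemma mul_kron_apply (N : Matrix (Fin dA) (Fin dA) ℂ)
    (Y : Matrix (Fin dA × Fin dB) (Fin dA × Fin dB) ℂ) (p q : Fin dA × Fin dB) :
    ((N ⊗ₖ (1 : Matrix (Fin dB) (Fin dB) ℂ)) * Y) p q = ∑ v, N p.1 v * Y (v, p.2) q := by
  rw [Matrix.mul_apply, Fintype.sum_prod_type]
  simp only [kroneckerMap_apply, Matrix.one_apply, mul_ite, mul_one, mul_zero, ite_mul, zero_mul,
    Finset.sum_ite_eq, Finset.sum_ite_eq', Finset.mem_univ, if_true]

lemma kron_mul_apply (N : Matrix (Fin dA) (Fin dA) ℂ)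
    (Y : Matrix (Fin dA × Fin dB) (Fin dA × Fin dB) ℂ) (p q : Fin dA × Fin dB) :
    (Y * (N ⊗ₖ (1 : Matrix (Fin dB) (Fin dB) ℂ))) p q = ∑ v, Y p (v, q.2) * N v q.1 := by
  rw [Matrix.mul_apply, Fintype.sum_prod_type]
  simp only [kroneckerMap_apply, Matrix.one_apply, mul_ite, mul_one, mul_zero, ite_mul, zero_mul,
    Finset.sum_ite_eq, Finset.sum_ite_eq', Finset.mem_univ, if_true]

lemma steer_apply (N : Matrix (Fin dA) (Fin dA) ℂ)
    (Y : Matrix (Fin dA × Fin dB) (Fin dA × Fin dB) ℂ) (j j' : Fin dB) :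
    ptraceA ((N ⊗ₖ (1 : Matrix (Fin dB) (Fin dB) ℂ)) * Y) j j'
      = ∑ u, ∑ v, N u v * Y (v, j) (u, j') := by
  simp only [ptraceA, mul_kron_apply]

lemma ptraceA_comm (N : Matrix (Fin dA) (Fin dA) ℂ)
    (Y : Matrix (Fin dA × Fin dB) (Fin dA × Fin dB) ℂ) :
    ptraceA ((N ⊗ₖ (1 : Matrix (Fin dB) (Fin dB) ℂ)) * Y)
      = ptraceA (Y * (N ⊗ₖ (1 : Matrix (Fin dB) (Fin dB) ℂ))) := by
  ext j j'
  simp only [ptraceA, mul_kron_apply, kron_mul_apply]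
  rw [Finset.sum_comm]
  exact Finset.sum_congr rfl fun u _ => Finset.sum_congr rfl fun v _ => mul_comm _ _

lemma steer_trace (N : Matrix (Fin dA) (Fin dA) ℂ)
    (Y : Matrix (Fin dA × Fin dB) (Fin dA × Fin dB) ℂ) :
    (ptraceA ((N ⊗ₖ (1 : Matrix (Fin dB) (Fin dB) ℂ)) * Y)).trace
      = ∑ u, ∑ v, N u v * ptraceB Y v u := by
  simp only [Matrix.trace, Matrix.diag, steer_apply, ptraceB, Finset.mul_sum]
  rw [Finset.sum_comm]
  exact Finset.sum_congr rfl fun u _ => Finset.sum_comm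

lemma steer_isHermitian {N : Matrix (Fin dA) (Fin dA) ℂ} (hN : N.IsHermitian)
    {Y : Matrix (Fin dA × Fin dB) (Fin dA × Fin dB) ℂ} (hY : Y.IsHermitian) :
    (ptraceA ((N ⊗ₖ (1 : Matrix (Fin dB) (Fin dB) ℂ)) * Y)).IsHermitian := by
  ext j j'
  simp only [conjTranspose_apply, steer_apply, star_sum, star_mul']
  rw [Finset.sum_comm]
  exact Finset.sum_congr rfl fun u _ => Finset.sum_congr rfl fun v _ => by
    rw [hN.apply, hY.apply]

open scoped MatrixOrder in
lemma steer_posSemidef {M : Matrix (Fin dA) (Fin dA) ℂ} (hM : M.PosSemidef)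
    {Y : Matrix (Fin dA × Fin dB) (Fin dA × Fin dB) ℂ} (hY : Y.PosSemidef) :
    (ptraceA ((M ⊗ₖ (1 : Matrix (Fin dB) (Fin dB) ℂ)) * Y)).PosSemidef := by
  set S := CFC.sqrt M with hS
  have hSh : S.IsHermitian := (Matrix.nonneg_iff_posSemidef.mp (CFC.sqrt_nonneg M)).1
  have hkh : (S ⊗ₖ (1 : Matrix (Fin dB) (Fin dB) ℂ))ᴴ = S ⊗ₖ 1 := by
    ext p q
    simp only [conjTranspose_apply, kroneckerMap_apply, star_mul', Matrix.one_apply,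
      apply_ite star, star_one, star_zero, hSh.apply]
    by_cases h : p.2 = q.2 <;> simp [h, eq_comm, mul_comm]
  have hsplit : (M ⊗ₖ (1 : Matrix (Fin dB) (Fin dB) ℂ)) * Y
      = (S ⊗ₖ (1 : Matrix (Fin dB) (Fin dB) ℂ)) * ((S ⊗ₖ 1) * Y) := by
    rw [← Matrix.mul_assoc, ← Matrix.mul_kronecker_mul, CFC.sqrt_mul_sqrt_self M (Matrix.nonneg_iff_posSemidef.mpr hM), Matrix.one_mul]
  rw [hsplit, ptraceA_comm]
  have hp : ((S ⊗ₖ (1 : Matrix (Fin dB) (Fin dB) ℂ)) * Y * (S ⊗ₖ 1)ᴴ).PosSemidef :=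
    hY.mul_mul_conjTranspose_same _
  rw [hkh] at hp
  exact ptraceA_posSemidef hp

variable {n : Type*} [Fintype n] [DecidableEq n]

lemma psd_diag {X : Matrix n n ℂ} (hX : X.PosSemidef) (p : n) :
    0 ≤ (X p p).re ∧ (X p p).im = 0 := by
  have h := hX.dotProduct_mulVec_nonneg (Pi.single p 1)
  rw [← Pi.single_star, star_one] at h
  rw [Matrix.mulVec_single, single_dotProduct] at h
  simp only [mul_one, one_mul, Pi.smul_apply, Matrix.col_apply, op_smul_eq_mul] at h
  rw [Complex.le_def] at h
  exact ⟨h.1, h.2.symm⟩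

lemma psd_key {X : Matrix n n ℂ} (hX : X.PosSemidef) {p q : n} (hpq : p ≠ q) (t : ℝ) :
    0 ≤ t ^ 2 * Complex.normSq (X p q) * (X p p).re
      - 2 * t * Complex.normSq (X p q) + (X q q).re := by
  have him := (psd_diag hX p).2
  have h := hX.dotProduct_mulVec_nonneg (Pi.single p (-(t : ℂ) * X p q) + Pi.single q 1)
  rw [star_add, ← Pi.single_star, ← Pi.single_star, star_one] at h
  rw [Matrix.mulVec_add, Matrix.mulVec_single, Matrix.mulVec_single] at h
  rw [dotProduct_add, add_dotProduct, add_dotProduct,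
    single_dotProduct, single_dotProduct, single_dotProduct,
    single_dotProduct] at h
  simp only [Pi.smul_apply, Matrix.col_apply, op_smul_eq_mul] at h
  rw [← hX.1.apply q p] at h
  have hre := (Complex.le_def.mp h).1
  simp only [Complex.add_re, Complex.mul_re, Complex.mul_im, Complex.neg_re, Complex.neg_im,
    Complex.ofReal_re, Complex.ofReal_im, Complex.one_re, Complex.one_im, Complex.zero_re,
    Complex.star_def, Complex.conj_re, Complex.conj_im, mul_one, one_mul, mul_zero, zero_mul,
    him] at hre
  simp only [Complex.normSq_apply]
  nlinarith [hre]

lemma psd_row_zero {X : Matrix n n ℂ} (hX : X.PosSemidef) {p q : n} (hp : X p p = 0) :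
    X p q = 0 := by
  rcases eq_or_ne p q with rfl | hpq
  · exact hp
  by_contra hne
  have hn : 0 < Complex.normSq (X p q) := by
    simpa [Complex.normSq_pos] using hne
  have h := psd_key hX hpq (((X q q).re + 1) / (2 * Complex.normSq (X p q)))
  rw [hp] at h
  simp only [Complex.zero_re, mul_zero, zero_mul] at h
  have he : 2 * (((X q q).re + 1) / (2 * Complex.normSq (X p q))) * Complex.normSq (X p q)
      = (X q q).re + 1 := by
    field_simp
  rw [he] at h
  linarith

lemma psd2_bound {X : Matrix (Fin 2) (Fin 2) ℂ} (hX : X.PosSemidef) :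
    Complex.normSq (X 0 1) ≤ (X 0 0).re * (X 1 1).re := by
  have h00 := psd_diag hX 0
  have h11 := psd_diag hX 1
  rcases eq_or_lt_of_le h00.1 with hz | hpos
  · have hX00 : X 0 0 = 0 := Complex.ext (by simpa using hz.symm) h00.2
    rw [psd_row_zero hX hX00]
    simp [mul_nonneg h00.1 h11.1]
  · set d : ℝ := 1 / (X 0 0).re with hd
    have h := psd_key hX (show (0 : Fin 2) ≠ 1 by decide) d
    have hcd : (X 0 0).re * d = 1 := by
      rw [hd]; field_simp
    have h2 := mul_nonneg h hpos.le
    have h3 : (d ^ 2 * Complex.normSq (X 0 1) * (X 0 0).re - 2 * d * Complex.normSq (X 0 1)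
        + (X 1 1).re) * (X 0 0).re
        = Complex.normSq (X 0 1) * ((X 0 0).re * d) ^ 2
          - 2 * Complex.normSq (X 0 1) * ((X 0 0).re * d) + (X 1 1).re * (X 0 0).re := by
      ring
    rw [h3, hcd] at h2
    nlinarith [h2]

lemma star_dot (y : n → ℂ) :
    dotProduct (star y) y = ((∑ i, Complex.normSq (y i) : ℝ) : ℂ) := by
  simp only [dotProduct, Pi.star_apply, Complex.star_def, Complex.ofReal_sum]
  exact Finset.sum_congr rfl fun i _ => Complex.normSq_eq_conj_mul_self.symm

lemma half_posSemidef {H : Matrix n n ℂ} (hH : H.IsHermitian)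
    (hbound : ∀ y : n → ℂ, ∃ q : ℝ,
      dotProduct (star y) (H *ᵥ y) = (q : ℂ) ∧ |q| ≤ ∑ i, Complex.normSq (y i))
    {ε : ℝ} (hε : |ε| ≤ 1) :
    (((1 : ℂ)/2) • ((1 : Matrix n n ℂ) + (ε : ℂ) • H)).PosSemidef := by
  refine Matrix.posSemidef_iff_dotProduct_mulVec.mpr ⟨?_, ?_⟩
  · show _ᴴ = _
    rw [Matrix.conjTranspose_smul, Matrix.conjTranspose_add, Matrix.conjTranspose_one,
      Matrix.conjTranspose_smul, hH.eq]
    norm_num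
  · intro y
    obtain ⟨q, hq, hqb⟩ := hbound y
    have hS : 0 ≤ ∑ i, Complex.normSq (y i) :=
      Finset.sum_nonneg fun i _ => Complex.normSq_nonneg _
    rw [Matrix.smul_mulVec, Matrix.add_mulVec, Matrix.one_mulVec,
      Matrix.smul_mulVec, dotProduct_smul, dotProduct_add,
      dotProduct_smul, star_dot, hq]
    have hval : ((1 : ℂ)/2) • (((∑ i, Complex.normSq (y i) : ℝ) : ℂ) + (ε : ℂ) • (q : ℂ))
        = (((∑ i, Complex.normSq (y i) + ε * q) / 2 : ℝ) : ℂ) := by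
      push_cast
      simp only [smul_eq_mul]
      ring
    rw [hval, Complex.le_def]
    constructor
    · simp only [Complex.ofReal_re, Complex.zero_re]
      have h1 : |ε * q| ≤ |q| := by
        rw [abs_mul]
        calc |ε| * |q| ≤ 1 * |q| := mul_le_mul_of_nonneg_right hε (abs_nonneg _)
          _ = |q| := one_mul _
      have h2 : -(∑ i, Complex.normSq (y i)) ≤ ε * q := by
        have := neg_abs_le (ε * q)
        linarith [h1, hqb]
      linarith
    · simp

lemma one_sub_half (H : Matrix n n ℂ) (ε : ℝ) :
    (1 : Matrix n n ℂ) - ((1 : ℂ)/2) • ((1 : Matrix n n ℂ) + (ε : ℂ) • H)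
      = ((1 : ℂ)/2) • ((1 : Matrix n n ℂ) + ((-ε : ℝ) : ℂ) • H) := by
  ext p q
  simp only [Matrix.sub_apply, Matrix.smul_apply, Matrix.add_apply, smul_eq_mul,
    Complex.ofReal_neg]
  ring

lemma blochState_trace (sx sy sz : ℝ) : (blochState sx sy sz).trace = 1 := by
  simp [blochState, Matrix.trace_fin_two]
  ring

lemma key {dA : ℕ} {ρ : Matrix (Fin dA × Fin 2) (Fin dA × Fin 2) ℂ}
    (hρ : ρ.PosSemidef) {rx ry rz : ℝ}
    (hB : ptraceA ρ = blochState rx ry rz) (hrz : rz ^ 2 < 1)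
    {H : Matrix (Fin dA) (Fin dA) ℂ} (hH : H.IsHermitian)
    (hbound : ∀ y : Fin dA → ℂ, ∃ q : ℝ,
      dotProduct (star y) (H *ᵥ y) = (q : ℂ) ∧ |q| ≤ ∑ i, Complex.normSq (y i))
    {h dx dy dz : ℝ}
    (hX : ptraceA ((H ⊗ₖ (1 : Matrix (Fin 2) (Fin 2) ℂ)) * ρ)
      = (h : ℂ) • blochState rx ry rz +
        !![(dz : ℂ)/2, ((dx : ℂ) - (dy : ℂ) * Complex.I)/2;
           ((dx : ℂ) + (dy : ℂ) * Complex.I)/2, -(dz : ℂ)/2])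
    (hQ : 0 < (rx ^ 2 + ry ^ 2) * dz ^ 2 + (1 - rz ^ 2) * (dx ^ 2 + dy ^ 2)) :
    ∃ M : Matrix (Fin dA) (Fin dA) ℂ, M.IsHermitian ∧ M.PosSemidef ∧
      ((1 : Matrix (Fin dA) (Fin dA) ℂ) - M).PosSemidef ∧
      ∃ t : ℝ, 0 < t ∧
        ((M ⊗ₖ (1 : Matrix (Fin 2) (Fin 2) ℂ)) * ρ).trace = (t : ℂ) ∧
        ∃ sx sy sz : ℝ, sx ^ 2 + sy ^ 2 + sz ^ 2 ≤ 1 ∧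
          ptraceA ((M ⊗ₖ (1 : Matrix (Fin 2) (Fin 2) ℂ)) * ρ) =
            (t : ℂ) • blochState sx sy sz ∧
          (rx ^ 2 + ry ^ 2) * sz ^ 2 + (1 - rz ^ 2) * (sx ^ 2 + sy ^ 2) >
            rx ^ 2 + ry ^ 2 := by
  set L := 2 * (rx ^ 2 + ry ^ 2) * rz * dz + 2 * (1 - rz ^ 2) * (rx * dx + ry * dy) with hLdef
  set s0 : ℝ := if 0 ≤ L then 1 else -1 with hs0def
  have hs0 : s0 = 1 ∨ s0 = -1 := by
    rw [hs0def]; split_ifs <;> simp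
  have hs0ne : s0 ≠ 0 := by rcases hs0 with h' | h' <;> rw [h'] <;> norm_num
  have hs0L : 0 ≤ s0 * L := by
    rw [hs0def]; split_ifs with hc
    · simpa using hc
    · push_neg at hc; nlinarith
  have hden : (0 : ℝ) < 2 * (1 + |h|) := by positivity
  set ε : ℝ := s0 / (2 * (1 + |h|)) with hεdef
  have hεne : ε ≠ 0 := div_ne_zero hs0ne hden.ne'
  have habs0 : |s0| = 1 := by rcases hs0 with h' | h' <;> rw [h'] <;> norm_num
  have hεabs : |ε| ≤ 1/2 := by
    rw [hεdef, abs_div, habs0, abs_of_pos hden, div_le_iff₀ hden]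
    have := abs_nonneg h
    linarith
  have hε1 : |ε| ≤ 1 := le_trans hεabs (by norm_num)
  have hεh : 0 < 1 + ε * h := by
    have h1 : |ε * h| ≤ 1/2 := by
      rw [abs_mul, hεdef, abs_div, habs0, abs_of_pos hden,
        div_mul_eq_mul_div, one_mul, div_le_iff₀ hden]
      have := abs_nonneg h
      nlinarith [abs_nonneg h]
    have := neg_abs_le (ε * h)
    linarith
  set M := ((1 : ℂ)/2) • ((1 : Matrix (Fin dA) (Fin dA) ℂ) + (ε : ℂ) • H) with hMdef
  have hMpsd : M.PosSemidef := half_posSemidef hH hbound hε1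
  have hMcpsd : ((1 : Matrix (Fin dA) (Fin dA) ℂ) - M).PosSemidef := by
    rw [hMdef, one_sub_half]
    exact half_posSemidef hH hbound (by rwa [abs_neg])
  set t := (1 + ε * h)/2 with htdef
  have ht : 0 < t := by rw [htdef]; linarith
  set δ := ε / (1 + ε * h) with hδdef
  have hδne : δ ≠ 0 := div_ne_zero hεne hεh.ne'
  have hδL : 0 ≤ δ * L := by
    rw [hδdef, div_mul_eq_mul_div]
    apply div_nonneg _ hεh.le
    rw [hεdef, div_mul_eq_mul_div]
    exact div_nonneg hs0L hden.le
  set sx := rx + δ * dx with hsxdef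
  set sy := ry + δ * dy with hsydef
  set sz := rz + δ * dz with hszdef
  have hδc : (δ : ℂ) * (1 + (ε : ℂ) * (h : ℂ)) = (ε : ℂ) := by
    have h' : δ * (1 + ε * h) = ε := div_mul_cancel₀ _ hεh.ne'
    exact_mod_cast h'
  clear_value L s0 ε M t δ sx sy sz
  have e1 : ∀ j j' : Fin 2, ptraceA ((M ⊗ₖ (1 : Matrix (Fin 2) (Fin 2) ℂ)) * ρ) j j'
      = (1/2 : ℂ) * (ptraceA ρ j j')
        + ((ε : ℂ)/2) * (ptraceA ((H ⊗ₖ (1 : Matrix (Fin 2) (Fin 2) ℂ)) * ρ) j j') := by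
    intro j j'
    rw [steer_apply, steer_apply, ptraceA_apply, Finset.mul_sum, Finset.mul_sum,
      ← Finset.sum_add_distrib]
    refine Finset.sum_congr rfl fun u _ => ?_
    calc ∑ v, M u v * ρ (v, j) (u, j')
        = ∑ v, ((1/2 : ℂ) * ((if u = v then (1:ℂ) else 0) * ρ (v, j) (u, j'))
            + ((ε : ℂ)/2) * (H u v * ρ (v, j) (u, j'))) := by
          refine Finset.sum_congr rfl fun v _ => ?_
          rw [hMdef]
          simp only [Matrix.smul_apply, Matrix.add_apply, Matrix.one_apply, smul_eq_mul]
          ring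
      _ = _ := by
          rw [Finset.sum_add_distrib, ← Finset.mul_sum, ← Finset.mul_sum]
          congr 2
          simp [Finset.sum_ite_eq]
  have hXM : ptraceA ((M ⊗ₖ (1 : Matrix (Fin 2) (Fin 2) ℂ)) * ρ)
      = ((t : ℝ) : ℂ) • blochState sx sy sz := by
    ext j j'
    rw [e1 j j', hB, hX]
    simp only [Matrix.smul_apply, Matrix.add_apply, smul_eq_mul]
    rw [htdef, hsxdef, hsydef, hszdef]
    fin_cases j <;> fin_cases j' <;>
      simp [blochState] <;> push_cast
    · linear_combination (-(dz:ℂ)/4) * hδc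
    · linear_combination (-((dx:ℂ) - (dy:ℂ) * Complex.I)/4) * hδc
    · linear_combination (-((dx:ℂ) + (dy:ℂ) * Complex.I)/4) * hδc
    · linear_combination ((dz:ℂ)/4) * hδc
  refine ⟨M, hMpsd.1, hMpsd, hMcpsd, t, ht, ?_, sx, sy, sz, ?_, hXM, ?_⟩
  · rw [← ptraceA_trace, hXM, Matrix.trace_smul, blochState_trace, smul_eq_mul, mul_one]
  · have hpsd := steer_posSemidef hMpsd hρ
    rw [hXM] at hpsd
    have hb := psd2_bound hpsd
    have h00 := (psd_diag hpsd 0).1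
    have h11 := (psd_diag hpsd 1).1
    have e00 : (((t : ℝ) : ℂ) • blochState sx sy sz) 0 0 = ((t * (1 + sz) / 2 : ℝ) : ℂ) := by
      simp only [Matrix.smul_apply, smul_eq_mul, blochState, Matrix.cons_val', Matrix.cons_val_zero,
        Matrix.empty_val', Matrix.cons_val_fin_one, Matrix.of_apply]
      push_cast
      ring
    have e11 : (((t : ℝ) : ℂ) • blochState sx sy sz) 1 1 = ((t * (1 - sz) / 2 : ℝ) : ℂ) := by
      simp only [Matrix.smul_apply, smul_eq_mul, blochState, Matrix.cons_val', Matrix.cons_val_zero,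
        Matrix.cons_val_one, Matrix.head_cons, Matrix.head_fin_const, Matrix.empty_val',
        Matrix.cons_val_fin_one, Matrix.of_apply]
      push_cast
      ring
    have e01 : (((t : ℝ) : ℂ) • blochState sx sy sz) 0 1
        = ((t * sx / 2 : ℝ) : ℂ) + ((-(t * sy) / 2 : ℝ) : ℂ) * Complex.I := by
      simp only [Matrix.smul_apply, smul_eq_mul, blochState, Matrix.cons_val', Matrix.cons_val_zero,
        Matrix.cons_val_one, Matrix.head_cons, Matrix.head_fin_const, Matrix.empty_val',
        Matrix.cons_val_fin_one, Matrix.of_apply]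
      push_cast
      ring
    rw [e01] at hb
    rw [Complex.normSq_add_mul_I] at hb
    rw [e00] at h00 hb
    rw [e11] at h11 hb
    simp only [Complex.ofReal_re] at h00 h11 hb
    nlinarith [hb, h00, h11, mul_pos ht ht]
  · have hident : (rx^2+ry^2)*sz^2 + (1-rz^2)*(sx^2+sy^2) - (rx^2+ry^2)
        = δ * L + δ^2 * ((rx^2+ry^2)*dz^2 + (1-rz^2)*(dx^2+dy^2)) := by
      rw [hsxdef, hsydef, hszdef, hLdef]
      ring
    have hδ2 : 0 < δ^2 := (sq_nonneg δ).lt_of_ne (Ne.symm (pow_ne_zero 2 hδne))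
    linarith [hδL, mul_pos hδ2 hQ, hident]

lemma sum_std (u v : Fin dA) (c : ℂ) (f : Fin dA → Fin dA → ℂ) :
    ∑ p, ∑ q, Matrix.single u v c p q * f p q = c * f u v := by
  simp only [Matrix.single, Matrix.of_apply, ite_and, ite_mul, zero_mul,
    Finset.sum_ite_irrel, Finset.sum_const_zero, Finset.sum_ite_eq, Finset.mem_univ, if_true]

lemma std_pair_herm (u v : Fin dA) (c : ℂ) :
    (Matrix.single u v c + Matrix.single v u (star c)).IsHermitian := by
  ext p q
  simp only [Matrix.conjTranspose_apply, Matrix.add_apply, Matrix.single,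
    Matrix.of_apply, star_add, apply_ite star, star_zero, star_star]
  by_cases h1 : u = p ∧ v = q <;> by_cases h2 : v = p ∧ u = q <;>
    simp [h1, h2, and_comm, add_comm] <;> tauto

lemma std_diag_herm (v : Fin dA) : (Matrix.single v v (1 : ℂ)).IsHermitian := by
  ext p q
  simp only [Matrix.conjTranspose_apply, Matrix.single, Matrix.of_apply,
    apply_ite star, star_zero, star_one]
  by_cases h1 : v = p ∧ v = q <;> by_cases h2 : v = q ∧ v = p <;> simp [h1, h2] <;> tauto

lemma std_diag_bound (v : Fin dA) :
    ∀ y : Fin dA → ℂ, ∃ q : ℝ,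
      dotProduct (star y) ((Matrix.single v v (1 : ℂ)) *ᵥ y) = (q : ℂ) ∧
      |q| ≤ ∑ i, Complex.normSq (y i) := by
  intro y
  refine ⟨Complex.normSq (y v), ?_, ?_⟩
  · rw [Matrix.single_mulVec, one_mul]
    rw [show Function.update (0 : Fin dA → ℂ) v (y v) = Pi.single v (y v) from rfl]
    rw [dotProduct_single, Pi.star_apply, Complex.star_def]
    exact Complex.normSq_eq_conj_mul_self.symm
  · rw [abs_of_nonneg (Complex.normSq_nonneg _)]
    exact Finset.single_le_sum (f := fun i => Complex.normSq (y i))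
      (fun i _ => Complex.normSq_nonneg _) (Finset.mem_univ v)

lemma std_pair_bound (u v : Fin dA) (huv : u ≠ v) {c : ℂ} (hc : ‖c‖ = 1) :
    ∀ y : Fin dA → ℂ, ∃ q : ℝ,
      dotProduct (star y)
        ((Matrix.single u v c + Matrix.single v u (star c)) *ᵥ y) = (q : ℂ) ∧
      |q| ≤ ∑ i, Complex.normSq (y i) := by
  intro y
  set z : ℂ := star (y u) * (c * y v) with hz
  refine ⟨2 * z.re, ?_, ?_⟩
  · rw [Matrix.add_mulVec, Matrix.single_mulVec, Matrix.single_mulVec]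
    rw [show Function.update (0 : Fin dA → ℂ) u (c * y v) = Pi.single u (c * y v) from rfl]
    rw [show Function.update (0 : Fin dA → ℂ) v (star c * y u) = Pi.single v (star c * y u)
      from rfl]
    rw [dotProduct_add, dotProduct_single, dotProduct_single,
      Pi.star_apply, Pi.star_apply]
    have hzz : star (y v) * (star c * y u) = star z := by
      rw [hz, star_mul', star_mul', star_star]
      ring
    rw [hzz, ← hz, Complex.star_def, Complex.add_conj]
  · have h1 : |2 * z.re| ≤ 2 * ‖z‖ := by
      rw [abs_mul, abs_two]
      exact mul_le_mul_of_nonneg_left (Complex.abs_re_le_norm z) (by norm_num)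
    have h2 : ‖z‖ = ‖y u‖ * ‖y v‖ := by
      rw [hz, Complex.norm_mul, Complex.norm_mul, Complex.star_def, Complex.norm_conj, hc]
      ring
    have h3 : 2 * (‖y u‖ * ‖y v‖)
        ≤ ‖y u‖ ^ 2 + ‖y v‖ ^ 2 := by
      nlinarith [sq_nonneg (‖y u‖ - ‖y v‖)]
    have h4 : ‖y u‖ ^ 2 = Complex.normSq (y u) := Complex.sq_norm _
    have h5 : ‖y v‖ ^ 2 = Complex.normSq (y v) := Complex.sq_norm _
    have h6 : Complex.normSq (y u) + Complex.normSq (y v) ≤ ∑ i, Complex.normSq (y i) := by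
      rw [← Finset.sum_pair (f := fun i => Complex.normSq (y i)) huv]
      exact Finset.sum_le_sum_of_subset_of_nonneg (Finset.subset_univ _)
        (fun i _ _ => Complex.normSq_nonneg _)
    linarith [h1, h2, h3, h4, h5, h6]



lemma build {dA : ℕ} {ρ : Matrix (Fin dA × Fin 2) (Fin dA × Fin 2) ℂ}
    (hρ : ρ.PosSemidef) {rx ry rz : ℝ}
    (hB : ptraceA ρ = blochState rx ry rz) (hrz : rz ^ 2 < 1)
    {H : Matrix (Fin dA) (Fin dA) ℂ} (hH : H.IsHermitian)
    (hbound : ∀ y : Fin dA → ℂ, ∃ q : ℝ,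
      dotProduct (star y) (H *ᵥ y) = (q : ℂ) ∧ |q| ≤ ∑ i, Complex.normSq (y i))
    (j0 j0' : Fin 2)
    (hD : ptraceA ((H ⊗ₖ (1 : Matrix (Fin 2) (Fin 2) ℂ)) * ρ) j0 j0'
      ≠ (ptraceA ((H ⊗ₖ (1 : Matrix (Fin 2) (Fin 2) ℂ)) * ρ)).trace
          * blochState rx ry rz j0 j0')
    (hside : 0 < rx ^ 2 + ry ^ 2 ∨ (rx = 0 ∧ ry = 0 ∧ j0 = 0 ∧ j0' = 1)) :
    ∃ M : Matrix (Fin dA) (Fin dA) ℂ, M.IsHermitian ∧ M.PosSemidef ∧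
      ((1 : Matrix (Fin dA) (Fin dA) ℂ) - M).PosSemidef ∧
      ∃ t : ℝ, 0 < t ∧
        ((M ⊗ₖ (1 : Matrix (Fin 2) (Fin 2) ℂ)) * ρ).trace = (t : ℂ) ∧
        ∃ sx sy sz : ℝ, sx ^ 2 + sy ^ 2 + sz ^ 2 ≤ 1 ∧
          ptraceA ((M ⊗ₖ (1 : Matrix (Fin 2) (Fin 2) ℂ)) * ρ) =
            (t : ℂ) • blochState sx sy sz ∧
          (rx ^ 2 + ry ^ 2) * sz ^ 2 + (1 - rz ^ 2) * (sx ^ 2 + sy ^ 2) >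
            rx ^ 2 + ry ^ 2 := by
  set X := ptraceA ((H ⊗ₖ (1 : Matrix (Fin 2) (Fin 2) ℂ)) * ρ) with hXdef
  have hXherm : X.IsHermitian := steer_isHermitian hH hρ.1
  have him00 : (X 0 0).im = 0 := by
    have := hXherm.apply 0 0
    rwa [Complex.star_def, Complex.conj_eq_iff_im] at this
  have him11 : (X 1 1).im = 0 := by
    have := hXherm.apply 1 1
    rwa [Complex.star_def, Complex.conj_eq_iff_im] at this
  set h := (X 0 0).re + (X 1 1).re with hhdef
  set dz := 2 * (X 0 0).re - h * (1 + rz) with hdzdef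
  set dx := 2 * (X 1 0).re - h * rx with hdxdef
  set dy := 2 * (X 1 0).im - h * ry with hdydef
  have h00' : X 0 0 = ((h * (1 + rz)/2 + dz/2 : ℝ) : ℂ) := by
    apply Complex.ext
    · simp only [Complex.ofReal_re]
      rw [hdzdef]; ring
    · simp [him00]
  have h11' : X 1 1 = ((h * (1 - rz)/2 - dz/2 : ℝ) : ℂ) := by
    apply Complex.ext
    · simp only [Complex.ofReal_re]
      rw [hdzdef, hhdef]; ring
    · simp [him11]
  have h10' : X 1 0 = ((h * rx/2 + dx/2 : ℝ) : ℂ) + ((h * ry/2 + dy/2 : ℝ) : ℂ) * Complex.I := by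
    apply Complex.ext
    · simp only [Complex.add_re, Complex.ofReal_re, Complex.mul_re, Complex.I_re, Complex.I_im,
        Complex.ofReal_im, mul_zero, mul_one, zero_mul, sub_zero, add_zero, zero_sub]
      rw [hdxdef]; ring
    · simp only [Complex.add_im, Complex.ofReal_im, Complex.mul_im, Complex.I_re, Complex.I_im,
        Complex.ofReal_re, mul_zero, mul_one, zero_mul, add_zero, zero_add]
      rw [hdydef]; ring
  have h01' : X 0 1 = ((h * rx/2 + dx/2 : ℝ) : ℂ) - ((h * ry/2 + dy/2 : ℝ) : ℂ) * Complex.I := by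
    rw [← hXherm.apply 0 1, h10']
    simp only [star_add, star_mul', Complex.star_def, Complex.conj_ofReal, Complex.conj_I]
    ring
  have hXdec : X = (h : ℂ) • blochState rx ry rz +
      !![(dz : ℂ)/2, ((dx : ℂ) - (dy : ℂ) * Complex.I)/2;
         ((dx : ℂ) + (dy : ℂ) * Complex.I)/2, -(dz : ℂ)/2] := by
    ext j j'
    fin_cases j <;> fin_cases j' <;>
      simp only [Matrix.smul_apply, Matrix.add_apply, smul_eq_mul] <;>
      simp [blochState]
    · rw [h00']; push_cast; ring
    · rw [h01']; push_cast; ring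
    · rw [h10']; push_cast; ring
    · rw [h11']; push_cast; ring
  have htrX : X.trace = (h : ℂ) := by
    rw [Matrix.trace_fin_two, h00', h11']
    push_cast; ring
  have hDm : (!![(dz : ℂ)/2, ((dx : ℂ) - (dy : ℂ) * Complex.I)/2;
      ((dx : ℂ) + (dy : ℂ) * Complex.I)/2, -(dz : ℂ)/2]) j0 j0' ≠ 0 := by
    intro h0
    apply hD
    rw [htrX]
    have := congrFun (congrFun hXdec j0) j0'
    rw [this]
    simp [Matrix.add_apply, Matrix.smul_apply, h0, smul_eq_mul]
  have hQ : 0 < (rx ^ 2 + ry ^ 2) * dz ^ 2 + (1 - rz ^ 2) * (dx ^ 2 + dy ^ 2) := by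
    have h1rz : 0 < 1 - rz ^ 2 := by linarith
    have hoff : ∀ (hne : ¬(dx = 0 ∧ dy = 0)), 0 < dx ^ 2 + dy ^ 2 := by
      intro hne
      rcases not_and_or.mp hne with h' | h'
      · have := (sq_nonneg dx).lt_of_ne (Ne.symm (pow_ne_zero 2 h'))
        nlinarith [sq_nonneg dy]
      · have := (sq_nonneg dy).lt_of_ne (Ne.symm (pow_ne_zero 2 h'))
        nlinarith [sq_nonneg dx]
    rcases hside with hr | ⟨hrx, hry, hj0, hj0'⟩
    · fin_cases j0 <;> fin_cases j0' <;> simp only [] at hDm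
      · have hdz : dz ≠ 0 := by
          intro h0; apply hDm; simp [h0]
        have h2 : 0 < dz ^ 2 := (sq_nonneg dz).lt_of_ne (Ne.symm (pow_ne_zero 2 hdz))
        nlinarith [mul_pos hr h2, mul_nonneg h1rz.le (by positivity : (0:ℝ) ≤ dx ^ 2 + dy ^ 2)]
      · have hne : ¬(dx = 0 ∧ dy = 0) := by
          rintro ⟨h1, h2⟩; apply hDm; simp [h1, h2]
        nlinarith [mul_pos h1rz (hoff hne), mul_nonneg hr.le (sq_nonneg dz)]
      · have hne : ¬(dx = 0 ∧ dy = 0) := by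
          rintro ⟨h1, h2⟩; apply hDm; simp [h1, h2]
        nlinarith [mul_pos h1rz (hoff hne), mul_nonneg hr.le (sq_nonneg dz)]
      · have hdz : dz ≠ 0 := by
          intro h0; apply hDm; simp [h0]
        have h2 : 0 < dz ^ 2 := (sq_nonneg dz).lt_of_ne (Ne.symm (pow_ne_zero 2 hdz))
        nlinarith [mul_pos hr h2, mul_nonneg h1rz.le (by positivity : (0:ℝ) ≤ dx ^ 2 + dy ^ 2)]
    · subst hj0 hj0'
      have hne : ¬(dx = 0 ∧ dy = 0) := by
        rintro ⟨h1, h2⟩; apply hDm; simp [h1, h2]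
      rw [hrx, hry]
      nlinarith [mul_pos h1rz (hoff hne), sq_nonneg dz]
  exact key hρ hB hrz hH hbound hXdec hQ

end CEIC

/-- If a shared state `ρ` on `A ⊗ B` (Bob a qubit) is correlated and not
quantum-incoherent, then some measurement of Alice steers Bob to a state strictly
outside the ellipsoid of states reachable from `ρᴮ` by stochastic incoherent
operations. -/
theorem correlations_enhance_incoherent_conversion (dA : ℕ)
    (ρ : Matrix (Fin dA × Fin 2) (Fin dA × Fin 2) ℂ)
    (hρ : ρ.PosSemidef) (htr : ρ.trace = 1)
    (hcorr : ρ ≠ ptraceB ρ ⊗ₖ ptraceA ρ)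
    (hnqi : ∃ (a a' : Fin dA) (i j : Fin 2), i ≠ j ∧ ρ (a, i) (a', j) ≠ 0)
    (rx ry rz : ℝ) (hB : ptraceA ρ = blochState rx ry rz) :
    ∃ M : Matrix (Fin dA) (Fin dA) ℂ, M.IsHermitian ∧ M.PosSemidef ∧
      ((1 : Matrix (Fin dA) (Fin dA) ℂ) - M).PosSemidef ∧
      ∃ t : ℝ, 0 < t ∧
        ((M ⊗ₖ (1 : Matrix (Fin 2) (Fin 2) ℂ)) * ρ).trace = (t : ℂ) ∧
        ∃ sx sy sz : ℝ, sx ^ 2 + sy ^ 2 + sz ^ 2 ≤ 1 ∧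
          ptraceA ((M ⊗ₖ (1 : Matrix (Fin 2) (Fin 2) ℂ)) * ρ) =
            (t : ℂ) • blochState sx sy sz ∧
          (rx ^ 2 + ry ^ 2) * sz ^ 2 + (1 - rz ^ 2) * (sx ^ 2 + sy ^ 2) >
            rx ^ 2 + ry ^ 2 := by
  classical
  have hBpsd : (ptraceA ρ).PosSemidef := CEIC.ptraceA_posSemidef hρ
  have e00 : blochState rx ry rz 0 0 = (((1 + rz)/2 : ℝ) : ℂ) := by
    simp [blochState]
  have e11 : blochState rx ry rz 1 1 = (((1 - rz)/2 : ℝ) : ℂ) := by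
    simp [blochState]
  have hd0 := (CEIC.psd_diag hBpsd 0).1
  have hd1 := (CEIC.psd_diag hBpsd 1).1
  rw [hB, e00] at hd0
  rw [hB, e11] at hd1
  simp only [Complex.ofReal_re] at hd0 hd1
  have hrz_le : rz ^ 2 ≤ 1 := by nlinarith
  by_cases hrzlt : rz ^ 2 < 1
  case neg =>
    exfalso
    have hrz2 : rz ^ 2 = 1 := le_antisymm hrz_le (not_lt.mp hrzlt)
    have hcase : rz = 1 ∨ rz = -1 := by
      rcases mul_eq_zero.mp (show (rz - 1) * (rz + 1) = 0 by nlinarith) with h' | h'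
      · exact Or.inl (by linarith)
      · exact Or.inr (by linarith)
    obtain ⟨a, a', i, j, hij, hne⟩ := hnqi
    obtain ⟨k, hBkk⟩ : ∃ k : Fin 2, ptraceA ρ k k = 0 := by
      rcases hcase with h1 | h1
      · exact ⟨1, by rw [hB, e11, h1]; norm_num⟩
      · exact ⟨0, by rw [hB, e00, h1]; norm_num⟩
    have hzero : ∀ b : Fin dA, ρ (b, k) (b, k) = 0 := by
      have hsum : ∑ b, ρ (b, k) (b, k) = 0 := hBkk
      intro b
      have hnn : ∀ p ∈ Finset.univ, (0 : ℂ) ≤ ρ (p, k) (p, k) := by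
        intro p _
        have hdd := CEIC.psd_diag hρ (p, k)
        rw [Complex.le_def]
        exact ⟨by simpa using hdd.1, by simp [hdd.2]⟩
      exact (Finset.sum_eq_zero_iff_of_nonneg hnn).mp hsum b (Finset.mem_univ b)
    have hk' : i = k ∨ j = k := by
      revert hij
      fin_cases i <;> fin_cases j <;> fin_cases k <;> decide
    rcases hk' with h' | h'
    · apply hne
      rw [h']
      exact CEIC.psd_row_zero hρ (hzero a)
    · apply hne
      rw [h']
      calc ρ (a, i) (a', k) = star (ρ (a', k) (a, i)) := (hρ.1.apply _ _).symm
        _ = 0 := by rw [CEIC.psd_row_zero hρ (hzero a')]; exact star_zero _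
  case pos =>
    have hwit : ∃ (u0 v0 : Fin dA) (j0 j0' : Fin 2),
        ρ (v0, j0) (u0, j0') ≠ ptraceB ρ v0 u0 * blochState rx ry rz j0 j0' ∧
        (0 < rx ^ 2 + ry ^ 2 ∨ (rx = 0 ∧ ry = 0 ∧ j0 = 0 ∧ j0' = 1)) := by
      rcases lt_or_ge 0 (rx ^ 2 + ry ^ 2) with hr | hr
      · have hex : ∃ p q, ρ p q ≠ (ptraceB ρ ⊗ₖ ptraceA ρ) p q := by
          by_contra hall
          push_neg at hall
          exact hcorr (Matrix.ext fun p q => hall p q)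
        obtain ⟨⟨v0, j0⟩, ⟨u0, j0'⟩, hpq⟩ := hex
        refine ⟨u0, v0, j0, j0', ?_, Or.inl hr⟩
        rw [hB] at hpq
        simpa [Matrix.kroneckerMap_apply] using hpq
      · have hrx : rx = 0 := by nlinarith [sq_nonneg rx, sq_nonneg ry]
        have hry : ry = 0 := by nlinarith [sq_nonneg rx, sq_nonneg ry]
        have hB01 : blochState rx ry rz 0 1 = 0 := by
          simp [blochState, hrx, hry]
        obtain ⟨a, a', i, j, hij, hne⟩ := hnqi
        fin_cases i <;> fin_cases j
        · simp at hij
        · exact ⟨a', a, 0, 1, by rw [hB01, mul_zero]; exact hne, Or.inr ⟨hrx, hry, rfl, rfl⟩⟩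
        · refine ⟨a, a', 0, 1, ?_, Or.inr ⟨hrx, hry, rfl, rfl⟩⟩
          rw [hB01, mul_zero]
          have hst : ρ (a', 0) (a, 1) = star (ρ (a, 1) (a', 0)) := (hρ.1.apply _ _).symm
          rw [hst]
          exact star_ne_zero.mpr hne
        · simp at hij
    obtain ⟨u0, v0, j0, j0', hα, hside⟩ := hwit
    by_cases huv : u0 = v0
    · subst huv
      have hXa : ∀ jj jj' : Fin 2,
          ptraceA (((Matrix.single u0 u0 (1 : ℂ)) ⊗ₖ (1 : Matrix (Fin 2) (Fin 2) ℂ)) * ρ) jj jj'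
          = ρ (u0, jj) (u0, jj') := by
        intro jj jj'
        rw [CEIC.steer_apply, CEIC.sum_std, one_mul]
      have htr2 : (ptraceA (((Matrix.single u0 u0 (1 : ℂ)) ⊗ₖ (1 : Matrix (Fin 2) (Fin 2) ℂ)) * ρ)).trace
          = ptraceB ρ u0 u0 := by
        rw [CEIC.steer_trace, CEIC.sum_std, one_mul]
      refine CEIC.build hρ hB hrzlt (CEIC.std_diag_herm u0) (CEIC.std_diag_bound u0) j0 j0' ?_ hside
      rw [hXa, htr2]
      exact hα
    · set αc := ρ (v0, j0) (u0, j0') - ptraceB ρ v0 u0 * blochState rx ry rz j0 j0' with hαc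
      set βc := ρ (u0, j0) (v0, j0') - ptraceB ρ u0 v0 * blochState rx ry rz j0 j0' with hβc
      have hαne : αc ≠ 0 := sub_ne_zero.mpr hα
      set c : ℂ := if αc + βc = 0 then -Complex.I else 1 with hc
      have habs : ‖c‖ = 1 := by rw [hc]; split_ifs <;> simp
      have hkey : c * αc + star c * βc ≠ 0 := by
        rw [hc]; split_ifs with hsum
        · have hβ : βc = -αc := by linear_combination hsum
          rw [hβ]
          have hexp : -Complex.I * αc + star (-Complex.I) * -αc = -2 * Complex.I * αc := by
            simp only [star_neg, Complex.star_def, Complex.conj_I]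
            ring
          rw [hexp]
          simp [hαne, Complex.I_ne_zero]
        · simpa using hsum
      have hXa : ∀ jj jj' : Fin 2,
          ptraceA (((Matrix.single u0 v0 c + Matrix.single v0 u0 (star c))
            ⊗ₖ (1 : Matrix (Fin 2) (Fin 2) ℂ)) * ρ) jj jj'
          = c * ρ (v0, jj) (u0, jj') + star c * ρ (u0, jj) (v0, jj') := by
        intro jj jj'
        rw [CEIC.steer_apply]
        simp only [Matrix.add_apply, add_mul, Finset.sum_add_distrib]
        rw [CEIC.sum_std, CEIC.sum_std]
      have htr2 : (ptraceA (((Matrix.single u0 v0 c + Matrix.single v0 u0 (star c))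
            ⊗ₖ (1 : Matrix (Fin 2) (Fin 2) ℂ)) * ρ)).trace
          = c * ptraceB ρ v0 u0 + star c * ptraceB ρ u0 v0 := by
        rw [CEIC.steer_trace]
        simp only [Matrix.add_apply, add_mul, Finset.sum_add_distrib]
        rw [CEIC.sum_std, CEIC.sum_std]
      refine CEIC.build hρ hB hrzlt (CEIC.std_pair_herm u0 v0 c)
        (CEIC.std_pair_bound u0 v0 huv habs) j0 j0' ?_ hside
      rw [hXa, htr2]
      intro heq
      apply hkey
      rw [hαc, hβc]
      linear_combination heq
end

section
/- Let ρ be a qubit density matrix with Bloch vector (r_x,r_y,r_z), and let (s_x,s_y,s_z) ∈ ℝ³ with s_x²+s_y²+s_z² ≤ 1 and s := √(s_x²+s_y²) > 0 be the Bloch vector of a target qubit state. For a unit vector ψ ∈ ℂ² define F(ψ) = min{ 1, (1 − |⟨ψ, σ_z ψ⟩|)·(1 + √(1−s²))/s² } (this is the optimal probability of converting the pure state ψψᴴ into the target state by a stochastic incoherent operation). Then the supremum, over all finite pure-state decompositions ρ = ∑_i q_i·ψ_iψ_iᴴ with q_i > 0, ∑_i q_i = 1 and ψ_i ∈ ℂ²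 unit vectors, of ∑_i q_i·F(ψ_i) equals min{ 1, (1 − |r_z|)·(1 + √(1−s²))/s² }, and this supremum is attained by a decomposition into two pure states. (This is the content of the paper's Theorem 2 on assisted incoherent state conversion from a purification, after reduction of one-way LQICC protocols to pure-state decompositions of Bob's local state.) -/
open Matrix BigOperators
open scoped Kronecker Classical ComplexOrder

/-- Optimal conversion probability of a pure qubit state `ψψᴴ` into the target state with
Bloch vector of squared transversal length `s2`. -/
noncomputable def pureConvProb (s2 : ℝ) (ψ : Fin 2 → ℂ) : ℝ :=
  min 1 ((1 - |Complex.normSq (ψ 0) - Complex.normSq (ψ 1)|) *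
    (1 + Real.sqrt (1 - s2)) / s2)

lemma witness (rx ry rz : ℝ) (hr : rx ^ 2 + ry ^ 2 + rz ^ 2 ≤ 1) :
    ∃ (q : Fin 2 → ℝ) (ψ : Fin 2 → Fin 2 → ℂ),
      (∀ i, 0 < q i) ∧ (∑ i, q i = 1) ∧
      (∀ i, ∑ j, Complex.normSq (ψ i j) = 1) ∧
      blochState rx ry rz = ∑ i, (q i : ℂ) • Matrix.vecMulVec (ψ i) (star (ψ i)) ∧
      (∀ i, Complex.normSq (ψ i 0) - Complex.normSq (ψ i 1) = rz) := by
  have hrz1 : -1 ≤ rz := by nlinarith [sq_nonneg rx, sq_nonneg ry]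
  have hrz2 : rz ≤ 1 := by nlinarith [sq_nonneg rx, sq_nonneg ry]
  obtain ⟨α, hαdef⟩ : ∃ a : ℝ, a = Real.sqrt ((1+rz)/2) := ⟨_, rfl⟩
  obtain ⟨β, hβdef⟩ : ∃ b : ℝ, b = Real.sqrt ((1-rz)/2) := ⟨_, rfl⟩
  have hαnn : 0 ≤ α := hαdef ▸ Real.sqrt_nonneg _
  have hα2 : α * α = (1+rz)/2 := by rw [hαdef]; exact Real.mul_self_sqrt (by linarith)
  have hβ2 : β * β = (1-rz)/2 := by rw [hβdef]; exact Real.mul_self_sqrt (by linarith)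
  obtain ⟨z, hzdef⟩ : ∃ w : ℂ, w = ((rx : ℂ) + ry * Complex.I) / (α : ℂ) := ⟨_, rfl⟩
  have hαz : (α : ℂ) * z = (rx : ℂ) + ry * Complex.I := by
    by_cases hα : α = 0
    · have h0 : (1+rz)/2 ≤ 0 := by
        by_contra h
        exact absurd hα (ne_of_gt (hαdef ▸ Real.sqrt_pos.mpr (lt_of_not_ge h)))
      have hrzm : rz = -1 := by linarith
      have hrx : rx = 0 := by nlinarith [sq_nonneg ry]
      have hry : ry = 0 := by nlinarith [sq_nonneg rx]
      simp [hα, hrx, hry]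
    · have hαc : (α : ℂ) ≠ 0 := by exact_mod_cast hα
      rw [hzdef, mul_div_cancel₀ _ hαc]
  have hkey : (α*α) * Complex.normSq z = rx^2 + ry^2 := by
    have := congrArg Complex.normSq hαz
    rw [Complex.normSq_mul, Complex.normSq_ofReal] at this
    rw [this, Complex.normSq_add_mul_I]
  have hnz : Complex.normSq z / 4 ≤ β * β := by
    by_cases hα : α = 0
    · have : z = 0 := by simp [hzdef, hα]
      simp [this]
      exact mul_self_nonneg β
    · have hα2p : 0 < α * α := mul_self_pos.mpr hα
      nlinarith [Complex.normSq_nonneg z]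
  obtain ⟨u, hudef⟩ : ∃ a : ℝ, a = Real.sqrt (β*β - Complex.normSq z/4) := ⟨_, rfl⟩
  have hu2 : u * u = β*β - Complex.normSq z/4 := by
    rw [hudef]; exact Real.mul_self_sqrt (by linarith)
  obtain ⟨d, hddef⟩ : ∃ w : ℂ, w = if z = 0 then 1 else z / (‖z‖ : ℂ) := ⟨_, rfl⟩
  have hd1 : Complex.normSq d = 1 := by
    rw [hddef]
    split_ifs with h
    · simp
    · rw [Complex.normSq_div, Complex.normSq_ofReal, ← Complex.sq_norm]
      have : ‖z‖ ≠ 0 := by simpa using h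
      field_simp
  have hzd : z * (starRingEnd ℂ) d = (‖z‖ : ℂ) := by
    rw [hddef]
    split_ifs with h
    · simp [h]
    · have habs : (‖z‖ : ℂ) ≠ 0 := by simpa using h
      rw [map_div₀, Complex.conj_ofReal,
        show z * ((starRingEnd ℂ) z / (‖z‖ : ℂ)) =
          z * (starRingEnd ℂ) z / (‖z‖ : ℂ) by ring,
        Complex.mul_conj, ← Complex.sq_norm]
      push_cast
      rw [sq]
      field_simp
  obtain ⟨v, hvdef⟩ : ∃ w : ℂ, w = (u : ℂ) * Complex.I * d := ⟨_, rfl⟩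
  have hvv : Complex.normSq v = u * u := by
    rw [hvdef, Complex.normSq_mul, Complex.normSq_mul, Complex.normSq_ofReal,
      Complex.normSq_I, hd1]
    ring
  have hcross : (z * (starRingEnd ℂ) v).re = 0 := by
    have : z * (starRingEnd ℂ) v = -((u * ‖z‖ : ℝ) * Complex.I) := by
      rw [hvdef]
      simp only [_root_.map_mul, Complex.conj_ofReal, Complex.conj_I]
      push_cast
      rw [show z * ((u:ℂ) * -Complex.I * (starRingEnd ℂ) d) =
        (u:ℂ) * -Complex.I * (z * (starRingEnd ℂ) d) by ring, hzd]
      ring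
    rw [this]
    simp
  have hn0 : Complex.normSq (z/2 + v) = β * β := by
    rw [Complex.normSq_add, hvv]
    have h2 : Complex.normSq (z/2) = Complex.normSq z / 4 := by
      rw [show z/2 = z * (1/2 : ℂ) by ring, Complex.normSq_mul]
      norm_num
      ring
    rw [h2]
    have : (z / 2 * (starRingEnd ℂ) v).re = 0 := by
      rw [show z/2 * (starRingEnd ℂ) v = z * (starRingEnd ℂ) v * (1/2:ℂ) by ring]
      simp [Complex.mul_re, hcross]
    rw [this]; linarith
  have hn1 : Complex.normSq (z/2 - v) = β * β := by
    rw [Complex.normSq_sub, hvv]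
    have h2 : Complex.normSq (z/2) = Complex.normSq z / 4 := by
      rw [show z/2 = z * (1/2 : ℂ) by ring, Complex.normSq_mul]
      norm_num
      ring
    rw [h2]
    have : (z / 2 * (starRingEnd ℂ) v).re = 0 := by
      rw [show z/2 * (starRingEnd ℂ) v = z * (starRingEnd ℂ) v * (1/2:ℂ) by ring]
      simp [Complex.mul_re, hcross]
    rw [this]; linarith
  have hα2c : (α:ℂ) * (α:ℂ) = (1 + (rz:ℂ))/2 := by
    have := congrArg (fun x : ℝ => (x : ℂ)) hα2
    push_cast at this
    simpa using this
  have hαzc : (α : ℂ) * (starRingEnd ℂ) z = (rx : ℂ) - ry * Complex.I := by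
    have := congrArg (starRingEnd ℂ) hαz
    simp only [map_add, _root_.map_mul, Complex.conj_ofReal, Complex.conj_I] at this
    rw [this]; ring
  have hzzc : z * (starRingEnd ℂ) z = ((Complex.normSq z : ℝ) : ℂ) := Complex.mul_conj z
  have hvvc : v * (starRingEnd ℂ) v = (u:ℂ) * (u:ℂ) := by
    rw [Complex.mul_conj, hvv]; push_cast; ring
  have hu2c : (u:ℂ) * (u:ℂ) = (β:ℂ)*(β:ℂ) - ((Complex.normSq z : ℝ):ℂ)/4 := by
    have := congrArg (fun x : ℝ => (x : ℂ)) hu2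
    push_cast at this
    simpa using this
  have hβ2c : ((β:ℝ) : ℂ) * ((β:ℝ) : ℂ) = (1 - (rz:ℂ))/2 := by
    have := congrArg (fun x : ℝ => (x : ℂ)) hβ2
    push_cast at this
    simpa using this
  refine ⟨![1/2, 1/2], ![![(α:ℂ), z/2 + v], ![(α:ℂ), z/2 - v]], ?_, ?_, ?_, ?_, ?_⟩
  · intro i; fin_cases i <;> norm_num
  · simp; norm_num
  · intro i; fin_cases i <;>
      simp [Fin.sum_univ_two, Complex.normSq_ofReal, hn0, hn1] <;> linarith
  · ext i j
    fin_cases i <;> fin_cases j <;>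
      simp only [blochState, Matrix.sum_apply, Matrix.smul_apply, Matrix.vecMulVec_apply,
        Pi.star_apply, Fin.sum_univ_two, smul_eq_mul, Matrix.cons_val', Matrix.cons_val_zero,
        Matrix.cons_val_one, Matrix.head_cons, Matrix.empty_val', Matrix.cons_val_fin_one,
        Matrix.head_fin_const, Matrix.of_apply, Complex.star_def, Fin.isValue, Fin.zero_eta,
        Fin.mk_one] <;>
      simp only [map_add, map_sub, map_div₀, _root_.map_mul, map_ofNat, _root_.map_one,
        Complex.conj_ofReal, Complex.conj_I] <;>
      push_cast
    · linear_combination -hα2c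
    · linear_combination -hαzc / 2
    · linear_combination -hαz / 2
    · linear_combination (-(1/4 : ℂ)) * hzzc - hvvc - hu2c - hβ2c
  · intro i; fin_cases i <;>
      simp [Complex.normSq_ofReal, hn0, hn1] <;> linarith

lemma convUB {s2 : ℝ} (hsc : 0 < s2) (rz : ℝ) {N : ℕ} (q : Fin N → ℝ) (ψ : Fin N → Fin 2 → ℂ)
    (hq : ∀ i, 0 < q i) (hq1 : ∑ i, q i = 1)
    (h00 : (1+rz)/2 = ∑ i, q i * Complex.normSq (ψ i 0))
    (h11 : (1-rz)/2 = ∑ i, q i * Complex.normSq (ψ i 1)) :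
    ∑ i, q i * pureConvProb s2 (ψ i) ≤
      min 1 ((1 - |rz|) * (1 + Real.sqrt (1 - s2)) / s2) := by
  set a : Fin N → ℝ := fun i => Complex.normSq (ψ i 0) - Complex.normSq (ψ i 1) with hadef
  have hc : (0:ℝ) ≤ (1 + Real.sqrt (1 - s2)) / s2 :=
    div_nonneg (by positivity) hsc.le
  have hrz : rz = ∑ i, q i * a i := by
    have h : ∑ i, q i * a i
        = (∑ i, q i * Complex.normSq (ψ i 0)) - ∑ i, q i * Complex.normSq (ψ i 1) := by
      rw [← Finset.sum_sub_distrib]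
      exact Finset.sum_congr rfl (fun i _ => by rw [hadef]; ring)
    rw [h, ← h00, ← h11]; ring
  have habs : |rz| ≤ ∑ i, q i * |a i| := by
    calc |rz| = |∑ i, q i * a i| := by rw [hrz]
    _ ≤ ∑ i, |q i * a i| := Finset.abs_sum_le_sum_abs _ _
    _ = ∑ i, q i * |a i| :=
        Finset.sum_congr rfl (fun i _ => by rw [abs_mul, abs_of_pos (hq i)])
  apply le_min
  · calc ∑ i, q i * pureConvProb s2 (ψ i) ≤ ∑ i, q i * 1 :=
        Finset.sum_le_sum (fun i _ => mul_le_mul_of_nonneg_left (min_le_left _ _) (hq i).le)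
    _ = 1 := by simp only [mul_one]; exact hq1
  · calc ∑ i, q i * pureConvProb s2 (ψ i)
        ≤ ∑ i, q i * ((1 - |a i|) * ((1 + Real.sqrt (1 - s2)) / s2)) := by
          refine Finset.sum_le_sum (fun i _ => mul_le_mul_of_nonneg_left ?_ (hq i).le)
          calc pureConvProb s2 (ψ i)
              ≤ (1 - |a i|) * (1 + Real.sqrt (1 - s2)) / s2 := min_le_right _ _
          _ = (1 - |a i|) * ((1 + Real.sqrt (1 - s2)) / s2) := by ring
    _ = (∑ i, q i * (1 - |a i|)) * ((1 + Real.sqrt (1 - s2)) / s2) := by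
          rw [Finset.sum_mul]
          exact Finset.sum_congr rfl (fun i _ => by ring)
    _ ≤ (1 - |rz|) * ((1 + Real.sqrt (1 - s2)) / s2) := by
          refine mul_le_mul_of_nonneg_right ?_ hc
          have h : ∑ i, q i * (1 - |a i|) = (∑ i, q i) - ∑ i, q i * |a i| := by
            rw [← Finset.sum_sub_distrib]
            exact Finset.sum_congr rfl (fun i _ => by ring)
          rw [h, hq1]
          linarith
    _ = (1 - |rz|) * (1 + Real.sqrt (1 - s2)) / s2 := by ring

lemma extractDiag (rx ry rz : ℝ) {N : ℕ} (q : Fin N → ℝ) (ψ : Fin N → Fin 2 → ℂ)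
    (hρ : blochState rx ry rz = ∑ i, (q i : ℂ) • Matrix.vecMulVec (ψ i) (star (ψ i))) :
    (1+rz)/2 = ∑ i, q i * Complex.normSq (ψ i 0) ∧
    (1-rz)/2 = ∑ i, q i * Complex.normSq (ψ i 1) := by
  have h0 := congrFun (congrFun hρ 0) 0
  have h1 := congrFun (congrFun hρ 1) 1
  simp only [blochState, Matrix.sum_apply, Matrix.smul_apply, Matrix.vecMulVec_apply,
    Pi.star_apply, smul_eq_mul, Complex.star_def, Complex.mul_conj, Matrix.cons_val',
    Matrix.cons_val_zero, Matrix.cons_val_one, Matrix.head_cons, Matrix.empty_val',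
    Matrix.cons_val_fin_one, Matrix.head_fin_const, Matrix.of_apply] at h0 h1
  constructor
  · exact_mod_cast h0
  · exact_mod_cast h1

/-- **Theorem 2 (paper).** The optimal assisted conversion probability, expressed as a
supremum over pure-state decompositions of Bob's local state, equals
`min{1, (1-|rz|)(1+√(1-s²))/s²}`, and it is attained by a two-element decomposition. -/
theorem assisted_conversion_from_purification
    (rx ry rz sx sy sz : ℝ)
    (hr : rx ^ 2 + ry ^ 2 + rz ^ 2 ≤ 1) (hs : sx ^ 2 + sy ^ 2 + sz ^ 2 ≤ 1)
    (hsc : 0 < sx ^ 2 + sy ^ 2)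
    (T : Set ℝ)
    (hT : T = {x : ℝ | ∃ (N : ℕ) (q : Fin N → ℝ) (ψ : Fin N → Fin 2 → ℂ),
      (∀ i, 0 < q i) ∧ (∑ i, q i = 1) ∧
      (∀ i, ∑ j, Complex.normSq (ψ i j) = 1) ∧
      blochState rx ry rz = ∑ i, (q i : ℂ) • Matrix.vecMulVec (ψ i) (star (ψ i)) ∧
      x = ∑ i, q i * pureConvProb (sx ^ 2 + sy ^ 2) (ψ i)}) :
    sSup T = min 1 ((1 - |rz|) * (1 + Real.sqrt (1 - (sx ^ 2 + sy ^ 2))) /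
        (sx ^ 2 + sy ^ 2)) ∧
    ∃ (q : Fin 2 → ℝ) (ψ : Fin 2 → Fin 2 → ℂ),
      (∀ i, 0 < q i) ∧ (∑ i, q i = 1) ∧
      (∀ i, ∑ j, Complex.normSq (ψ i j) = 1) ∧
      blochState rx ry rz = ∑ i, (q i : ℂ) • Matrix.vecMulVec (ψ i) (star (ψ i)) ∧
      ∑ i, q i * pureConvProb (sx ^ 2 + sy ^ 2) (ψ i) = sSup T := by
  
  set s2 : ℝ := sx ^ 2 + sy ^ 2 with hs2def
  set M : ℝ := min 1 ((1 - |rz|) * (1 + Real.sqrt (1 - s2)) / s2) with hMdef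
  obtain ⟨q, ψ, hq, hq1, hnorm, hρ, ha⟩ := witness rx ry rz hr
  have hsum : ∑ i, q i * pureConvProb s2 (ψ i) = M := by
    have hpc : ∀ i, pureConvProb s2 (ψ i) = M := by
      intro i
      rw [hMdef, pureConvProb, ha i]
    calc ∑ i, q i * pureConvProb s2 (ψ i) = ∑ i, q i * M :=
        Finset.sum_congr rfl (fun i _ => by rw [hpc i])
    _ = (∑ i, q i) * M := by rw [Finset.sum_mul]
    _ = M := by rw [hq1, one_mul]
  have hMT : M ∈ T := by
    rw [hT]
    exact ⟨2, q, ψ, hq, hq1, hnorm, hρ, hsum.symm⟩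
  have hub : ∀ x ∈ T, x ≤ M := by
    intro x hx
    rw [hT] at hx
    obtain ⟨N, q', ψ', hq', hq1', hnorm', hρ', hx'⟩ := hx
    obtain ⟨hd0, hd1⟩ := extractDiag rx ry rz q' ψ' hρ'
    rw [hx']
    exact convUB hsc rz q' ψ' hq' hq1' hd0 hd1
  have hSup : sSup T = M :=
    le_antisymm (csSup_le ⟨M, hMT⟩ hub) (le_csSup ⟨M, fun x hx => hub x hx⟩ hMT)
  exact ⟨hSup, q, ψ, hq, hq1, hnorm, hρ, by rw [hSup, hsum]⟩
end

section
/- Let 0 ≤ q_w ≤ 1 and let ρ_w = q_w·|φ⁺⟩⟨φ⁺| + ((1−q_w)/4)·I be the two-qubit Werner state, where φ⁺ = (|00⟩+|11⟩)/√2. For every Hermitian 2×2 matrix M with 0 ⪯ M ⪯ I such that t := Tr[(M ⊗ I)·ρ_w] is a positive real number, the normalized post-measurement state σ = Tr_A[(M ⊗ I)·ρ_w]/t on Bob's side satisfies σ ⪯ (1+q_w)·Δσ; that is, the Δ-robustness of coherence of any of Bob's post-measurement states is at most q_w. -/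
open Matrix BigOperators
open scoped Kronecker Classical ComplexOrder

/-- The maximally entangled two-qubit state `(|00⟩ + |11⟩)/√2`. -/
noncomputable def phiPlus : Fin 2 × Fin 2 → ℂ :=
  fun x => if x.1 = x.2 then ((Real.sqrt 2)⁻¹ : ℝ) else 0

/-- The two-qubit Werner state `q |φ⁺⟩⟨φ⁺| + (1-q)/4 · I`. -/
noncomputable def wernerState (qw : ℝ) : Matrix (Fin 2 × Fin 2) (Fin 2 × Fin 2) ℂ :=
  (qw : ℂ) • Matrix.vecMulVec phiPlus (star phiPlus) + (((1 - qw) / 4 : ℝ) : ℂ) • 1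


lemma werner_ptrace_key (q : ℝ) (M : Matrix (Fin 2) (Fin 2) ℂ) :
    ptraceA ((M ⊗ₖ (1 : Matrix (Fin 2) (Fin 2) ℂ)) * wernerState q) =
      ((q/2 : ℝ) : ℂ) • Mᵀ + ((((1-q)/4 : ℝ) : ℂ) * (M 0 0 + M 1 1)) • 1 := by
  have h2 : ((Real.sqrt 2 : ℝ) : ℂ)⁻¹ * ((Real.sqrt 2 : ℝ) : ℂ)⁻¹ = (1/2 : ℂ) := by
    rw [← mul_inv, ← Complex.ofReal_mul, Real.mul_self_sqrt (by norm_num)]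
    norm_num
  have hsq : ((Real.sqrt 2 : ℝ) : ℂ) ^ 2 = 2 := by
    rw [← Complex.ofReal_pow, Real.sq_sqrt (by norm_num)]; norm_num
  have hinv : (((Real.sqrt 2 : ℝ) : ℂ))⁻¹ ^ 2 = 1/2 := by
    rw [pow_two, h2]
  ext j j'
  fin_cases j <;> fin_cases j' <;>
    simp [ptraceA, wernerState, Matrix.mul_apply, Fintype.sum_prod_type,
      Fin.sum_univ_two, phiPlus, Matrix.vecMulVec_apply, Matrix.one_apply,
      Matrix.kroneckerMap_apply] <;>
    ring_nf <;>
    simp [h2, hsq, hinv] <;> ring_nf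

lemma posSemidef_real_smul {d : ℕ} {X : Matrix (Fin d) (Fin d) ℂ} (hX : X.PosSemidef)
    {r : ℝ} (hr : 0 ≤ r) : ((r : ℂ) • X).PosSemidef := by
  constructor
  · unfold Matrix.IsHermitian
    rw [Matrix.conjTranspose_smul, hX.1.eq]
    congr 1
    simp [Complex.conj_ofReal]
  · intro x
    exact (hX.smul (Complex.zero_le_real.mpr hr)).2 x

set_option maxHeartbeats 1000000 in

/-- Every normalized post-measurement state of Bob obtained from the Werner state by a
POVM element on Alice's side has Δ-robustness of coherence at most `q_w`, i.e.
`σ ⪯ (1 + q_w) Δσ`. -/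
theorem werner_post_measurement_robustness
    (qw : ℝ) (hqw0 : 0 ≤ qw) (hqw1 : qw ≤ 1)
    (M : Matrix (Fin 2) (Fin 2) ℂ) (hM : M.IsHermitian) (hM0 : M.PosSemidef)
    (hM1 : ((1 : Matrix (Fin 2) (Fin 2) ℂ) - M).PosSemidef)
    (t : ℝ) (ht : 0 < t)
    (htr : ((M ⊗ₖ (1 : Matrix (Fin 2) (Fin 2) ℂ)) * wernerState qw).trace = (t : ℂ))
    (σ : Matrix (Fin 2) (Fin 2) ℂ)
    (hσ : σ = (t : ℂ)⁻¹ • ptraceA ((M ⊗ₖ (1 : Matrix (Fin 2) (Fin 2) ℂ)) * wernerState qw)) :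
    (((1 + qw : ℝ) : ℂ) • dephase σ - σ).PosSemidef := by
  set D : Matrix (Fin 2) (Fin 2) ℂ := !![1, 0; 0, -1] with hD
  set P : Matrix (Fin 2) (Fin 2) ℂ := !![0, 1; 1, 0] with hP
  have hX : (D * M * Dᴴ).PosSemidef := hM0.mul_mul_conjTranspose_same D
  have hR1 : ((D * M * Dᴴ)ᵀ).PosSemidef := hX.transpose
  have hR2 : (P * (D * M * Dᴴ) * Pᴴ).PosSemidef := hX.mul_mul_conjTranspose_same P
  have hc1 : (0:ℝ) ≤ t⁻¹ * (qw * (1 + qw) / 4) :=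
    mul_nonneg (inv_nonneg.mpr ht.le) (by nlinarith)
  have hc2 : (0:ℝ) ≤ t⁻¹ * (qw * (1 - qw) / 4) :=
    mul_nonneg (inv_nonneg.mpr ht.le) (by nlinarith)
  have hDMD : (D * M * Dᴴ)ᵀ = !![M 0 0, -(M 1 0); -(M 0 1), M 1 1] := by
    ext i j
    fin_cases i <;> fin_cases j <;>
      simp [hD, Matrix.mul_apply, Matrix.vecMul, dotProduct, Fin.sum_univ_two,
        Matrix.conjTranspose_apply]
  have hPDP : P * (D * M * Dᴴ) * Pᴴ = !![M 1 1, -(M 1 0); -(M 0 1), M 0 0] := by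
    ext i j
    fin_cases i <;> fin_cases j <;>
      simp [hD, hP, Matrix.mul_apply, Matrix.vecMul, dotProduct, Fin.sum_univ_two,
        Matrix.conjTranspose_apply]
  have heq : ((1 + qw : ℝ) : ℂ) • dephase σ - σ =
      ((t⁻¹ * (qw * (1 + qw) / 4) : ℝ) : ℂ) • (D * M * Dᴴ)ᵀ +
      ((t⁻¹ * (qw * (1 - qw) / 4) : ℝ) : ℂ) • (P * (D * M * Dᴴ) * Pᴴ) := by
    rw [hσ, werner_ptrace_key, hDMD, hPDP]
    ext i j
    fin_cases i <;> fin_cases j <;>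
      simp [dephase, Matrix.diagonal, Matrix.diag, Matrix.one_apply] <;>
      push_cast <;>
      ring
  rw [heq]
  exact (posSemidef_real_smul hR1 hc1).add (posSemidef_real_smul hR2 hc2)
end

section
/- For a d×d density matrix ρ define the Δ-robustness of coherence C_{Δ,R}(ρ) = inf{ t ≥ 0 | ∃ a positive semidefinite d×d matrix τ with Δτ = Δρ such that ρ + t·τ is diagonal }. If ρ and σ are d×d density matrices, p > 0, and there exists a finite family (K_i) of strictly incoherent d×d Kraus operators with ∑_i K_iᴴK_i ⪯ I and ∑_i K_i ρ K_iᴴ = p·σ, then C_{Δ,R}(σ) ≤ C_{Δ,R}(ρ). (The Δ-robustness of coherence cannot increase under stochastic strictly incoherent operations, a necessary condition for stochastic SIO conversion in any dimension.) -/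
open Matrix BigOperators
open scoped Kronecker Classical ComplexOrder

/-- The Δ-robustness of coherence:
`C_{Δ,R}(ρ) = inf{ t ≥ 0 | ∃ τ ⪰ 0, Δτ = Δρ, ρ + tτ diagonal }`. -/
noncomputable def CDR {d : ℕ} (ρ : Matrix (Fin d) (Fin d) ℂ) : ℝ :=
  sInf {t : ℝ | 0 ≤ t ∧ ∃ τ : Matrix (Fin d) (Fin d) ℂ,
    τ.PosSemidef ∧ dephase τ = dephase ρ ∧ (ρ + (t : ℂ) • τ).IsDiag}

/-! ### Auxiliary lemmas -/

lemma dephase_apply {d : ℕ} (X : Matrix (Fin d) (Fin d) ℂ) (i j : Fin d) :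
    dephase X i j = if i = j then X i i else 0 := by
  simp [dephase, Matrix.diagonal_apply, Matrix.diag]

lemma dephase_smul {d : ℕ} (c : ℂ) (X : Matrix (Fin d) (Fin d) ℂ) :
    dephase (c • X) = c • dephase X := by
  ext i j
  by_cases h : i = j <;> simp [dephase_apply, h]

lemma dephase_sub {d : ℕ} (X Y : Matrix (Fin d) (Fin d) ℂ) :
    dephase (X - Y) = dephase X - dephase Y := by
  ext i j
  by_cases h : i = j <;> simp [dephase_apply, h]

lemma dephase_dephase {d : ℕ} (X : Matrix (Fin d) (Fin d) ℂ) :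
    dephase (dephase X) = dephase X := by
  ext i j
  by_cases h : i = j <;> simp [dephase_apply, h]

lemma dephase_sum {d n : ℕ} (f : Fin n → Matrix (Fin d) (Fin d) ℂ) :
    dephase (∑ i, f i) = ∑ i, dephase (f i) := by
  ext i j
  by_cases h : i = j <;> simp [dephase_apply, h, Matrix.sum_apply]

lemma isDiag_sum {d n : ℕ} (f : Fin n → Matrix (Fin d) (Fin d) ℂ)
    (hf : ∀ k, (f k).IsDiag) : (∑ k, f k).IsDiag := by
  intro i j h
  rw [Matrix.sum_apply]
  exact Finset.sum_eq_zero fun k _ => hf k h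

lemma psd_smul_real {d : ℕ} {M : Matrix (Fin d) (Fin d) ℂ} (hM : M.PosSemidef)
    {c : ℝ} (hc : 0 ≤ c) : ((c : ℂ) • M).PosSemidef := by
  refine Matrix.PosSemidef.of_dotProduct_mulVec_nonneg ?_ ?_
  · have := hM.1
    unfold Matrix.IsHermitian at *
    rw [Matrix.conjTranspose_smul, this]
    norm_num
  · intro x
    rw [Matrix.smul_mulVec, dotProduct_smul]
    exact smul_nonneg (Complex.zero_le_real.mpr hc) (hM.dotProduct_mulVec_nonneg x)

lemma psd_sum {d n : ℕ} (f : Fin n → Matrix (Fin d) (Fin d) ℂ)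
    (hf : ∀ k, (f k).PosSemidef) : (∑ k, f k).PosSemidef := by
  classical
  exact Finset.sum_induction f _ (fun a b ha hb => ha.add hb) Matrix.PosSemidef.zero
    (fun k _ => hf k)

lemma conj_isDiag {d : ℕ} {K D : Matrix (Fin d) (Fin d) ℂ}
    (hK : ∀ j i i', K i j ≠ 0 → K i' j ≠ 0 → i = i') (hD : D.IsDiag) :
    (K * D * Kᴴ).IsDiag := by
  intro i i' h
  rw [Matrix.mul_apply]
  refine Finset.sum_eq_zero fun j _ => ?_
  rw [Matrix.conjTranspose_apply]
  by_cases hKi' : K i' j = 0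
  · simp [hKi']
  have hKi : K i j = 0 := by
    by_contra hne
    exact h (hK j i i' hne hKi')
  rw [Matrix.mul_apply]
  have : ∀ j' ∈ Finset.univ, K i j' * D j' j = 0 := by
    intro j' _
    by_cases hj : j' = j
    · subst hj; simp [hKi]
    · simp [hD hj]
  rw [Finset.sum_eq_zero this, zero_mul]

lemma dephase_conj {d : ℕ} {K : Matrix (Fin d) (Fin d) ℂ} (hK : IsSIKraus K)
    (X : Matrix (Fin d) (Fin d) ℂ) :
    dephase (K * X * Kᴴ) = K * dephase X * Kᴴ := by
  have hdiag : (K * dephase X * Kᴴ).IsDiag :=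
    conj_isDiag hK.2 (Matrix.isDiag_diagonal _)
  ext i i'
  by_cases h : i = i'
  · subst h
    rw [dephase_apply]
    simp only [if_pos rfl]
    rw [Matrix.mul_apply, Matrix.mul_apply]
    refine Finset.sum_congr rfl fun j _ => ?_
    rw [Matrix.mul_apply, Matrix.mul_apply]
    by_cases hKij : K i j = 0
    · simp [hKij]
    congr 1
    have h1 : ∀ j' ∈ Finset.univ, j' ≠ j → K i j' * X j' j = 0 := by
      intro j' _ hj'
      by_cases hKij' : K i j' = 0
      · simp [hKij']
      · exact absurd (hK.1 i j' j hKij' hKij) hj'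
    have h2 : ∀ j' ∈ Finset.univ, j' ≠ j → K i j' * dephase X j' j = 0 := by
      intro j' _ hj'
      simp [dephase_apply, hj']
    rw [Finset.sum_eq_single_of_mem j (Finset.mem_univ j) h1,
        Finset.sum_eq_single_of_mem j (Finset.mem_univ j) h2, dephase_apply, if_pos rfl]
  · rw [dephase_apply, if_neg h, hdiag h]

lemma key_psd {d : ℕ} {ρ : Matrix (Fin d) (Fin d) ℂ} (hρ : ρ.PosSemidef) :
    (((d : ℂ) + 1) • dephase ρ - ρ).PosSemidef := by
  obtain ⟨B, hB⟩ : ∃ B : Matrix (Fin d) (Fin d) ℂ, ρ = Bᴴ * B := by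
    open scoped MatrixOrder in
    obtain ⟨B, hB⟩ := CStarAlgebra.nonneg_iff_eq_star_mul_self.mp hρ.nonneg
    exact ⟨B, hB⟩
  refine Matrix.PosSemidef.of_dotProduct_mulVec_nonneg ?_ ?_
  · have hD : (dephase ρ).IsHermitian := by
      apply Matrix.isHermitian_diagonal_of_self_adjoint
      funext i
      exact hρ.1.apply i i
    have := hρ.1
    unfold Matrix.IsHermitian at *
    rw [Matrix.conjTranspose_sub, Matrix.conjTranspose_smul, hD, this]
    norm_num
  · intro x
    set y : Fin d → ℂ := B *ᵥ x with hy
    have hQ2 : star x ⬝ᵥ ρ *ᵥ x = ∑ k, (Complex.normSq (y k) : ℂ) := by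
      rw [hB, ← Matrix.mulVec_mulVec, Matrix.dotProduct_mulVec, ← Matrix.star_mulVec, ← hy]
      simp only [dotProduct, Pi.star_apply, Complex.star_def]
      exact Finset.sum_congr rfl fun k _ => by rw [mul_comm, Complex.mul_conj]
    have hdiagρ : ∀ j, ρ j j = ∑ k, (Complex.normSq (B k j) : ℂ) := by
      intro j
      rw [hB, Matrix.mul_apply]
      refine Finset.sum_congr rfl fun k _ => ?_
      rw [Matrix.conjTranspose_apply, Complex.star_def, mul_comm, Complex.mul_conj]
    have hQ1 : star x ⬝ᵥ (dephase ρ) *ᵥ x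
        = ∑ j, ∑ k, ((Complex.normSq (B k j) * Complex.normSq (x j) : ℝ) : ℂ) := by
      simp only [dephase, dotProduct, Matrix.mulVec_diagonal, Matrix.diag, Pi.star_apply]
      refine Finset.sum_congr rfl fun j _ => ?_
      rw [hdiagρ j, show star (x j) * ((∑ k, (Complex.normSq (B k j) : ℂ)) * x j)
          = (∑ k, (Complex.normSq (B k j) : ℂ)) * (star (x j) * x j) by ring,
        Complex.star_def, mul_comm ((starRingEnd ℂ) (x j)), Complex.mul_conj, Finset.sum_mul]
      push_cast
      rfl
    set a : ℝ := ∑ j, ∑ k, Complex.normSq (B k j) * Complex.normSq (x j) with ha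
    set b : ℝ := ∑ k, Complex.normSq (y k) with hb
    have hQ1' : star x ⬝ᵥ (dephase ρ) *ᵥ x = (a : ℂ) := by rw [hQ1, ha]; push_cast; rfl
    have hQ2' : star x ⬝ᵥ ρ *ᵥ x = (b : ℂ) := by rw [hQ2, hb]; push_cast; rfl
    rw [Matrix.sub_mulVec, dotProduct_sub, Matrix.smul_mulVec,
      dotProduct_smul, hQ1', hQ2', smul_eq_mul]
    have key : b ≤ ((d : ℝ) + 1) * a := by
      have hb_le : b ≤ (d : ℝ) * a := by
        have step : ∀ k, Complex.normSq (y k)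
            ≤ (d : ℝ) * ∑ j, Complex.normSq (B k j) * Complex.normSq (x j) := by
          intro k
          have hyk : y k = ∑ j, B k j * x j := by
            simp [hy, Matrix.mulVec, dotProduct]
          have h1 : ‖y k‖ ≤ ∑ j, ‖B k j * x j‖ := by
            rw [hyk]; exact norm_sum_le _ _
          have h2 : Complex.normSq (y k) ≤ (∑ j, ‖B k j * x j‖) ^ 2 := by
            rw [← Complex.sq_norm]
            exact pow_le_pow_left₀ (norm_nonneg _) h1 2
          refine h2.trans ?_
          have h3 := sq_sum_le_card_mul_sum_sq (s := (Finset.univ : Finset (Fin d)))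
            (f := fun j => ‖B k j * x j‖)
          simp only [Finset.card_univ, Fintype.card_fin] at h3
          refine h3.trans_eq ?_
          congr 1
          refine Finset.sum_congr rfl fun j _ => ?_
          rw [norm_mul, mul_pow, Complex.sq_norm, Complex.sq_norm]
        calc b ≤ ∑ k, (d : ℝ) * ∑ j, Complex.normSq (B k j) * Complex.normSq (x j) :=
              Finset.sum_le_sum fun k _ => step k
          _ = (d : ℝ) * a := by
              rw [← Finset.mul_sum, ha, Finset.sum_comm]
      have ha_nonneg : 0 ≤ a := by
        refine Finset.sum_nonneg fun j _ => Finset.sum_nonneg fun k _ => ?_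
        exact mul_nonneg (Complex.normSq_nonneg _) (Complex.normSq_nonneg _)
      nlinarith
    have : ((d : ℂ) + 1) * (a : ℂ) - (b : ℂ) = ((((d : ℝ) + 1) * a - b : ℝ) : ℂ) := by
      push_cast; ring
    rw [this]
    exact Complex.zero_le_real.mpr (by linarith)

/-- The Δ-robustness of coherence cannot increase under stochastic strictly incoherent
operations. -/
theorem CDR_monotone_under_stochastic_SIO (d : ℕ)
    (ρ σ : Matrix (Fin d) (Fin d) ℂ)
    (hρ : ρ.PosSemidef) (hρtr : ρ.trace = 1)
    (hσ : σ.PosSemidef) (hσtr : σ.trace = 1)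
    (p : ℝ) (hp : 0 < p)
    (hconv : ∃ (N : ℕ) (K : Fin N → Matrix (Fin d) (Fin d) ℂ),
      (∀ i, IsSIKraus (K i)) ∧
      ((1 : Matrix (Fin d) (Fin d) ℂ) - ∑ i, (K i)ᴴ * K i).PosSemidef ∧
      ∑ i, K i * ρ * (K i)ᴴ = (p : ℂ) • σ) :
    CDR σ ≤ CDR ρ := by
  obtain ⟨N, K, hKsi, -, hKsum⟩ := hconv
  have hd : d ≠ 0 := by
    intro h
    subst h
    simp [Matrix.trace] at hρtr
  have hdC : (d : ℂ) ≠ 0 := Nat.cast_ne_zero.mpr hd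
  have hpC : (p : ℂ) ≠ 0 := by
    simp only [ne_eq, Complex.ofReal_eq_zero]
    exact hp.ne'
  -- The defining set for ρ is contained in the one for σ.
  have hsubset : {t : ℝ | 0 ≤ t ∧ ∃ τ : Matrix (Fin d) (Fin d) ℂ,
        τ.PosSemidef ∧ dephase τ = dephase ρ ∧ (ρ + (t : ℂ) • τ).IsDiag}
      ⊆ {t : ℝ | 0 ≤ t ∧ ∃ τ : Matrix (Fin d) (Fin d) ℂ,
        τ.PosSemidef ∧ dephase τ = dephase σ ∧ (σ + (t : ℂ) • τ).IsDiag} := by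
    rintro t ⟨ht0, τ, hτpsd, hτdeph, hdg⟩
    set c : ℂ := ((p⁻¹ : ℝ) : ℂ) with hc
    have hcp : c * (p : ℂ) = 1 := by
      rw [hc]
      push_cast
      exact inv_mul_cancel₀ hpC
    refine ⟨ht0, c • ∑ i, K i * τ * (K i)ᴴ, ?_, ?_, ?_⟩
    · exact psd_smul_real (psd_sum _ fun k => hτpsd.mul_mul_conjTranspose_same (K k))
        (inv_nonneg.mpr hp.le)
    · rw [dephase_smul, dephase_sum]
      have h1 : ∀ i : Fin N, dephase (K i * τ * (K i)ᴴ) = dephase (K i * ρ * (K i)ᴴ) := by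
        intro i
        rw [dephase_conj (hKsi i), dephase_conj (hKsi i), hτdeph]
      simp_rw [h1]
      rw [← dephase_sum, hKsum, dephase_smul, smul_smul, hcp, one_smul]
    · have hσeq : σ = c • ∑ i, K i * ρ * (K i)ᴴ := by
        rw [hKsum, smul_smul, hcp, one_smul]
      rw [hσeq, smul_comm ((t : ℂ)) c, ← smul_add, Finset.smul_sum,
        ← Finset.sum_add_distrib]
      have h2 : ∀ i : Fin N, K i * ρ * (K i)ᴴ + (t : ℂ) • (K i * τ * (K i)ᴴ)
          = K i * (ρ + (t : ℂ) • τ) * (K i)ᴴ := by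
        intro i
        rw [Matrix.mul_add, Matrix.add_mul, Matrix.mul_smul, Matrix.smul_mul]
      simp_rw [h2]
      exact Matrix.IsDiag.smul c (isDiag_sum _ fun i => conj_isDiag (hKsi i).2 hdg)
  -- The defining set for ρ is nonempty (it contains `d`).
  have hne : Set.Nonempty {t : ℝ | 0 ≤ t ∧ ∃ τ : Matrix (Fin d) (Fin d) ℂ,
      τ.PosSemidef ∧ dephase τ = dephase ρ ∧ (ρ + (t : ℂ) • τ).IsDiag} := by
    refine ⟨(d : ℝ), Nat.cast_nonneg d,
      Complex.ofReal (d : ℝ)⁻¹ • (((d : ℂ) + 1) • dephase ρ - ρ), ?_, ?_, ?_⟩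
    · exact psd_smul_real (key_psd hρ) (inv_nonneg.mpr (Nat.cast_nonneg d))
    · have h1 : ((d : ℂ) + 1) • dephase ρ - dephase ρ = (d : ℂ) • dephase ρ := by
        rw [add_smul, one_smul]; abel
      rw [dephase_smul, dephase_sub, dephase_smul, dephase_dephase, h1, smul_smul,
        show Complex.ofReal (d : ℝ)⁻¹ * (d : ℂ) = 1 by push_cast; exact inv_mul_cancel₀ hdC,
        one_smul]
    · rw [smul_smul, show (((d : ℝ) : ℂ)) * Complex.ofReal (d : ℝ)⁻¹ = 1 by
        push_cast; exact mul_inv_cancel₀ hdC, one_smul,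
        show ρ + (((d : ℂ) + 1) • dephase ρ - ρ) = ((d : ℂ) + 1) • dephase ρ by abel]
      exact Matrix.IsDiag.smul _ (Matrix.isDiag_diagonal _)
  exact csInf_le_csInf ⟨0, fun t ht => ht.1⟩ hne hsubset
end
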